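/- arXiv:1903.04132 — 9 statements merged into one kernel-verified Lean document; each statement's English description precedes it below -/
import Mathlib

section
/- For every integer k ≥ 2 there exists a constant C > 0 such that for all positive integers n₁ and n₂, every k-sum (n₁,n₂)-free subset S of [n₁]×[n₂] satisfies |S| ≤ ((k²−2)/k²)·n₁·n₂ + C·max(n₁,n₂). -/
open Finset

namespace Stmt0Aux

/-- sum of a multiset of pairs, componentwise -/
lemma msum_pair (Q : Multiset (ℤ × ℤ)) :
    Q.sum = ((Q.map Prod.fst).sum, (Q.map Prod.snd).sum) := by
  induction Q using Multiset.induction_on with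
  | empty => simp [Prod.ext_iff]
  | cons a s ih => simp [ih, Prod.ext_iff]

lemma rel_self {α : Type*} (r : α → α → Prop) (s : Multiset α) (h : ∀ x ∈ s, r x x) :
    Multiset.Rel r s s := by
  induction s using Multiset.induction_on with
  | empty => exact Multiset.Rel.zero
  | cons a s ih =>
    exact Multiset.Rel.cons (h a (Multiset.mem_cons_self a s))
      (ih fun x hx => h x (Multiset.mem_cons_of_mem hx))

lemma rel_to_pairs (S : Finset (ℤ × ℤ)) (ys xs : Multiset ℤ)
    (hrel : Multiset.Rel (fun y x => (x, y) ∈ S) ys xs) :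
    ∃ P : Multiset (ℤ × ℤ), (∀ p ∈ P, p ∈ S) ∧ P.map Prod.fst = xs ∧ P.map Prod.snd = ys := by
  induction hrel with
  | zero => exact ⟨0, by simp, by simp, by simp⟩
  | @cons a b s t hab _ ih =>
    obtain ⟨P, hP, hfst, hsnd⟩ := ih
    refine ⟨(b, a) ::ₘ P, ?_, by simp [hfst], by simp [hsnd]⟩
    intro p hp
    rcases Multiset.mem_cons.1 hp with h | h
    · rw [h]; exact hab
    · exact hP p h

lemma fin_sum_list {M : Type*} [AddCommMonoid M] (l : List M) :
    ∑ i : Fin l.length, l.get i = l.sum := by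
  induction l with
  | nil => simp
  | cons a t ih => simpa [Fin.sum_univ_succ] using congrArg (a + ·) ih

/-- Lemma A : pigeonhole for sums of k sets -/
lemma lemA (m : ℤ) (hm : 1 ≤ m) (A B : Finset ℤ) (rest : Multiset (Finset ℤ))
    (hA : A ⊆ Finset.Icc 1 m) (hB : B ⊆ Finset.Icc 1 m)
    (hrest : ∀ C ∈ rest, C ⊆ Finset.Icc 1 m)
    (hcard : (1 + (Multiset.card rest : ℤ)) * m + (2 + (Multiset.card rest : ℤ))
        ≤ (A.card : ℤ) + (B.card : ℤ) + ((rest.map (fun C => (C.card : ℤ))).sum)) :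
    ∃ va ∈ A, ∃ vb ∈ B, ∃ ys : Multiset ℤ,
      Multiset.Rel (fun y C => y ∈ C) ys rest ∧ va + vb + ys.sum = m := by
  classical
  set R : ℤ := (Multiset.card rest : ℤ) with hR
  have hR0 : 0 ≤ R := by positivity
  -- card of subsets of Icc 1 m
  have hsub_card : ∀ C : Finset ℤ, C ⊆ Finset.Icc 1 m → (C.card : ℤ) ≤ m := by
    intro C hC
    have := Finset.card_le_card hC
    have hIcc : ((Finset.Icc (1:ℤ) m).card : ℤ) = m := by
      rw [Int.card_Icc]
      rw [Int.toNat_of_nonneg (by linarith)]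
      ring
    calc (C.card : ℤ) ≤ ((Finset.Icc (1:ℤ) m).card : ℤ) := by exact_mod_cast this
      _ = m := hIcc
  have hAm : (A.card : ℤ) ≤ m := hsub_card A hA
  have hBm : (B.card : ℤ) ≤ m := hsub_card B hB
  -- every C in rest is nonempty
  have hne : ∀ C ∈ rest, C.Nonempty := by
    intro C hC
    rw [Finset.nonempty_iff_ne_empty]
    intro hemp
    subst hemp
    have h1 : rest = (∅ : Finset ℤ) ::ₘ rest.erase (∅ : Finset ℤ) := (Multiset.cons_erase hC).symm
    set rest' : Multiset (Finset ℤ) := rest.erase (∅ : Finset ℤ) with hrest'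
    have h2 : (rest'.map (fun C => ((C.card : ℤ)))).sum ≤ (rest'.map (fun _ => m)).sum := by
      apply Multiset.sum_map_le_sum_map
      intro D hD
      exact hsub_card D (hrest D (Multiset.mem_of_mem_erase hD))
    have h3 : (rest'.map (fun _ => m)).sum = ((Multiset.card rest') : ℤ) * m := by
      rw [show (fun _ : Finset ℤ => m) = Function.const (Finset ℤ) m from rfl]
      rw [Multiset.map_const, Multiset.sum_replicate, nsmul_eq_mul]
    have h4 : ((Multiset.card rest') : ℤ) = R - 1 := by
      have h5 : Multiset.card rest = Multiset.card rest' + 1 := by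
        conv_lhs => rw [h1]
        simp [hrest']
      rw [hR, h5]
      push_cast
      ring
    have hbound : ((rest.map (fun C => (C.card : ℤ))).sum) ≤ (R - 1) * m := by
      conv_lhs => rw [h1]
      simp only [Multiset.map_cons, Multiset.sum_cons, Finset.card_empty,
        Nat.cast_zero, zero_add]
      calc (rest'.map (fun C => ((C.card:ℤ)))).sum
          ≤ ((Multiset.card rest') : ℤ) * m := h2.trans_eq h3
        _ = (R-1) * m := by rw [h4]
    nlinarith [hcard, hAm, hBm]
  -- picks
  set pick : Finset ℤ → ℤ := fun C => if h : C.Nonempty then C.min' h else 1 with hpick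
  have hpick_mem : ∀ C ∈ rest, pick C ∈ C := by
    intro C hC
    simp only [hpick, dif_pos (hne C hC)]
    exact Finset.min'_mem C (hne C hC)
  have hpick_le : ∀ C ∈ rest, ∀ x ∈ C, pick C ≤ x := by
    intro C hC x hx
    simp only [hpick, dif_pos (hne C hC)]
    exact Finset.min'_le C x hx
  set ys : Multiset ℤ := rest.map pick with hys
  have hrel : Multiset.Rel (fun y C => y ∈ C) ys rest := by
    rw [hys, Multiset.rel_map_left]
    exact rel_self _ _ hpick_mem
  set σ : ℤ := ys.sum with hσ
  -- bounds on σ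
  have hσ1 : R ≤ σ := by
    have h2 : ((rest.map (fun _ => (1:ℤ))).sum) ≤ (rest.map pick).sum := by
      apply Multiset.sum_map_le_sum_map
      intro C hC
      have := hA -- dummy
      have hmem := hpick_mem C hC
      have := (hrest C hC) hmem
      rw [Finset.mem_Icc] at this
      exact this.1
    have h3 : ((rest.map (fun _ => (1:ℤ))).sum) = R := by
      rw [show (fun _ : Finset ℤ => (1:ℤ)) = Function.const (Finset ℤ) 1 from rfl]
      rw [Multiset.map_const, Multiset.sum_replicate, nsmul_eq_mul, mul_one]
    rw [hσ, hys]; rw [h3] at h2; exact h2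
  have hpickm : ∀ C ∈ rest, pick C ≤ m := by
    intro C hC
    have hmem := hpick_mem C hC
    have := (hrest C hC) hmem
    rw [Finset.mem_Icc] at this
    exact this.2
  have hσ2 : ((rest.map (fun C => (C.card : ℤ))).sum) ≤ R * (m+1) - σ := by
    have h2 : ((rest.map (fun C => (C.card : ℤ))).sum)
        ≤ ((rest.map (fun C => m + 1 - pick C)).sum) := by
      apply Multiset.sum_map_le_sum_map
      intro C hC
      have hsubC : C ⊆ Finset.Icc (pick C) m := by
        intro x hx
        rw [Finset.mem_Icc]
        exact ⟨hpick_le C hC x hx, by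
          have := (hrest C hC) hx; rw [Finset.mem_Icc] at this; exact this.2⟩
      have := Finset.card_le_card hsubC
      have hIcc : (((Finset.Icc (pick C) m).card) : ℤ) = m + 1 - pick C := by
        rw [Int.card_Icc]
        rw [Int.toNat_of_nonneg (by linarith [hpickm C hC])]
      calc ((C.card : ℤ)) ≤ (((Finset.Icc (pick C) m).card) : ℤ) := by exact_mod_cast this
        _ = m + 1 - pick C := hIcc
    have h3 : ((rest.map (fun C => m + 1 - pick C)).sum) = R * (m+1) - σ := by
      rw [Multiset.sum_map_sub]
      congr 1
      rw [show (fun _ : Finset ℤ => m + 1) = Function.const (Finset ℤ) (m+1) from rfl]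
      rw [Multiset.map_const, Multiset.sum_replicate, nsmul_eq_mul]
    rw [h3] at h2; exact h2
  have hABbig : m + σ + 2 ≤ (A.card : ℤ) + (B.card : ℤ) := by nlinarith [hcard, hσ2]
  set t' : ℤ := m - σ with ht'
  have ht'2 : 2 ≤ t' := by omega
  -- pigeonhole window
  set W : Finset ℤ := Finset.Icc 1 (t' - 1) with hW
  have hWcard : ((W.card : ℤ)) = t' - 1 := by
    rw [hW, Int.card_Icc, Int.toNat_of_nonneg (by omega)]
    ring
  set A' : Finset ℤ := A ∩ W with hA'
  set Bimg : Finset ℤ := B.image (fun b => t' - b) with hBimg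
  set B' : Finset ℤ := Bimg ∩ W with hB'
  have hAcard' : (A.card : ℤ) - (σ + 1) ≤ (A'.card : ℤ) := by
    have hsd : A \ W ⊆ Finset.Icc t' m := by
      intro x hx
      rw [Finset.mem_sdiff] at hx
      have h1 := hA hx.1
      rw [Finset.mem_Icc] at h1
      have h2 := hx.2
      rw [hW, Finset.mem_Icc] at h2
      rw [Finset.mem_Icc]
      omega
    have h3 : ((A \ W).card : ℤ) ≤ σ + 1 := by
      have := Finset.card_le_card hsd
      have hIcc : (((Finset.Icc t' m).card) : ℤ) = σ + 1 := by
        rw [Int.card_Icc, Int.toNat_of_nonneg (by omega)]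
        omega
      calc ((A \ W).card : ℤ) ≤ (((Finset.Icc t' m).card) : ℤ) := by exact_mod_cast this
        _ = σ + 1 := hIcc
    have h4 := Finset.card_inter_add_card_sdiff A W
    have h4' : ((A ∩ W).card : ℤ) + ((A \ W).card : ℤ) = (A.card : ℤ) := by exact_mod_cast h4
    rw [hA']
    omega
  have hBcard' : (B.card : ℤ) - (σ + 1) ≤ (B'.card : ℤ) := by
    have hinj : ((Bimg.card) : ℤ) = (B.card : ℤ) := by
      rw [hBimg]
      rw [Finset.card_image_of_injective _ (fun a b hab => by omega)]
    have hsd : Bimg \ W ⊆ Finset.Icc (t' - m) 0 := by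
      intro x hx
      rw [Finset.mem_sdiff] at hx
      obtain ⟨hx1, hx2⟩ := hx
      rw [hBimg, Finset.mem_image] at hx1
      obtain ⟨b, hb, hbe⟩ := hx1
      have h1 := hB hb
      rw [Finset.mem_Icc] at h1
      rw [hW, Finset.mem_Icc] at hx2
      rw [Finset.mem_Icc]
      omega
    have h3 : ((Bimg \ W).card : ℤ) ≤ σ + 1 := by
      have := Finset.card_le_card hsd
      have hIcc : (((Finset.Icc (t'-m) (0:ℤ)).card) : ℤ) = σ + 1 := by
        rw [Int.card_Icc, Int.toNat_of_nonneg (by omega)]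
        omega
      calc ((Bimg \ W).card : ℤ) ≤ _ := by exact_mod_cast this
        _ = σ + 1 := hIcc
    have h4 := Finset.card_inter_add_card_sdiff Bimg W
    have h4' : ((Bimg ∩ W).card : ℤ) + ((Bimg \ W).card : ℤ) = (Bimg.card : ℤ) := by
      exact_mod_cast h4
    rw [hB']
    omega
  -- intersection nonempty
  have hinter : (A' ∩ B').Nonempty := by
    rw [← Finset.card_pos]
    by_contra hcon
    push_neg at hcon
    have h0 : (A' ∩ B').card = 0 := by omega
    have h5 := Finset.card_union_add_card_inter A' B'
    have hsubW : A' ∪ B' ⊆ W := by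
      intro x hx
      rcases Finset.mem_union.1 hx with h | h
      · exact (Finset.mem_inter.1 h).2
      · exact (Finset.mem_inter.1 h).2
    have h6 := Finset.card_le_card hsubW
    have h6' : ((A' ∪ B').card : ℤ) ≤ t' - 1 := by
      rw [← hWcard]; exact_mod_cast h6
    have h5' : ((A' ∪ B').card : ℤ) + ((A' ∩ B').card : ℤ) = (A'.card : ℤ) + (B'.card : ℤ) := by
      exact_mod_cast h5
    rw [h0] at h5'
    push_cast at h5'
    omega
  obtain ⟨v, hv⟩ := hinter
  rw [Finset.mem_inter] at hv
  obtain ⟨hv1, hv2⟩ := hv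
  have hvA : v ∈ A := (Finset.mem_inter.1 hv1).1
  have hvB : ∃ b ∈ B, t' - b = v := by
    have := (Finset.mem_inter.1 hv2).1
    rw [hBimg, Finset.mem_image] at this
    exact this
  obtain ⟨b, hbB, hbe⟩ := hvB
  refine ⟨v, hvA, b, hbB, ys, hrel, ?_⟩
  omega


noncomputable def fib (S : Finset (ℤ × ℤ)) (x : ℤ) : Finset ℤ :=
  (S.filter (fun p => p.1 = x)).image Prod.snd

noncomputable def gfun (S : Finset (ℤ × ℤ)) (x : ℤ) : ℤ := ((fib S x).card : ℤ)

lemma fib_mem (S : Finset (ℤ × ℤ)) (x y : ℤ) : y ∈ fib S x ↔ (x, y) ∈ S := by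
  classical
  simp only [fib, Finset.mem_image, Finset.mem_filter]
  constructor
  · rintro ⟨p, ⟨hp, hp1⟩, hp2⟩
    have : p = (x, y) := by
      apply Prod.ext <;> simp [hp1, hp2]
    rwa [this] at hp
  · intro h
    exact ⟨(x, y), ⟨h, rfl⟩, rfl⟩

lemma fib_sub (S : Finset (ℤ × ℤ)) (N₁ N₂ : ℤ)
    (hS : S ⊆ Finset.Icc (1, 1) (N₁, N₂)) (x : ℤ) : fib S x ⊆ Finset.Icc 1 N₂ := by
  intro y hy
  rw [fib_mem] at hy
  have := hS hy
  rw [Finset.mem_Icc] at this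
  obtain ⟨h1, h2⟩ := this
  rw [Prod.le_def] at h1 h2
  rw [Finset.mem_Icc]
  exact ⟨h1.2, h2.2⟩

lemma fib_card (S : Finset (ℤ × ℤ)) (x : ℤ) :
    (fib S x).card = (S.filter (fun p => p.1 = x)).card := by
  classical
  apply Finset.card_image_of_injOn
  intro p hp q hq hpq
  rw [Finset.mem_coe, Finset.mem_filter] at hp hq
  apply Prod.ext
  · rw [hp.2, hq.2]
  · exact hpq

lemma step2 (k : ℕ) (hk : 2 ≤ k) (N₁ N₂ : ℤ) (hN₂ : 1 ≤ N₂) (S : Finset (ℤ × ℤ))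
    (hS : S ⊆ Finset.Icc (1, 1) (N₁, N₂))
    (hfree : ¬ ∃ a : Fin k → ℤ × ℤ, (∀ i, a i ∈ S) ∧ ∑ i, a i = (N₁, N₂))
    (T : Multiset ℤ) (hTc : Multiset.card T = k) (hTs : T.sum = N₁) :
    N₂ - k + 1 ≤ (T.map (fun x => N₂ - gfun S x)).sum := by
  classical
  by_contra hcon
  push_neg at hcon
  have hsum_sub : (T.map (fun x => N₂ - gfun S x)).sum = (k : ℤ) * N₂ - (T.map (gfun S)).sum := by
    rw [Multiset.sum_map_sub]
    congr 1
    rw [show (fun _ : ℤ => N₂) = Function.const ℤ N₂ from rfl]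
    rw [Multiset.map_const, Multiset.sum_replicate, nsmul_eq_mul, hTc]
  have hbig : ((k : ℤ) - 1) * N₂ + k ≤ (T.map (gfun S)).sum := by
    rw [hsum_sub] at hcon
    nlinarith [hcon]
  -- extract two elements
  have hT0 : T ≠ 0 := by
    intro h0
    rw [h0] at hTc
    simp at hTc
    omega
  obtain ⟨x₀, hx₀⟩ := Multiset.exists_mem_of_ne_zero hT0
  set T₀ : Multiset ℤ := T.erase x₀ with hT₀def
  have hT₀ : T = x₀ ::ₘ T₀ := (Multiset.cons_erase hx₀).symm
  have hT₀c : Multiset.card T₀ = k - 1 := by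
    have := congrArg Multiset.card hT₀
    simp at this
    omega
  have hT₀0 : T₀ ≠ 0 := by
    intro h0
    rw [h0] at hT₀c
    simp at hT₀c
    omega
  obtain ⟨x₁, hx₁⟩ := Multiset.exists_mem_of_ne_zero hT₀0
  set T₁ : Multiset ℤ := T₀.erase x₁ with hT₁def
  have hT₁ : T₀ = x₁ ::ₘ T₁ := (Multiset.cons_erase hx₁).symm
  have hT₁c : Multiset.card T₁ = k - 2 := by
    have := congrArg Multiset.card hT₁
    simp at this
    omega
  -- apply lemA
  have happ := lemA N₂ hN₂ (fib S x₀) (fib S x₁) (T₁.map (fib S))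
    (fib_sub S N₁ N₂ hS x₀) (fib_sub S N₁ N₂ hS x₁)
    (by
      intro C hC
      rw [Multiset.mem_map] at hC
      obtain ⟨x, _, hxe⟩ := hC
      rw [← hxe]
      exact fib_sub S N₁ N₂ hS x)
    (by
      have hRcard : (Multiset.card (T₁.map (fib S)) : ℤ) = (k : ℤ) - 2 := by
        rw [Multiset.card_map, hT₁c]
        push_cast [Nat.cast_sub hk]
        ring
      rw [hRcard]
      have hmm : (T₁.map (fib S)).map (fun C => ((C.card : ℤ))) = T₁.map (gfun S) := by
        rw [Multiset.map_map]
        rfl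
      rw [hmm]
      have hdecomp : (T.map (gfun S)).sum
          = gfun S x₀ + gfun S x₁ + (T₁.map (gfun S)).sum := by
        rw [hT₀, hT₁]
        simp [Multiset.map_cons, Multiset.sum_cons]
        ring
      rw [hdecomp] at hbig
      have : (1 + ((k : ℤ) - 2)) * N₂ + (2 + ((k : ℤ) - 2)) = ((k : ℤ) - 1) * N₂ + k := by ring
      rw [this]
      unfold gfun at hbig ⊢
      linarith [hbig])
  obtain ⟨va, hva, vb, hvb, ys, hrel, hsum2⟩ := happ
  -- convert Rel
  have hrel2 : Multiset.Rel (fun y x => (x, y) ∈ S) ys T₁ := by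
    rw [Multiset.rel_map_right] at hrel
    apply Multiset.Rel.mono hrel
    intro y _ x _ hyx
    rwa [fib_mem] at hyx
  obtain ⟨P, hPmem, hPfst, hPsnd⟩ := rel_to_pairs S ys T₁ hrel2
  set Q : Multiset (ℤ × ℤ) := (x₀, va) ::ₘ (x₁, vb) ::ₘ P with hQdef
  have hQmem : ∀ p ∈ Q, p ∈ S := by
    intro p hp
    rw [hQdef] at hp
    rcases Multiset.mem_cons.1 hp with h | hp2
    · rw [h]; rw [← fib_mem S x₀ va]; exact hva
    rcases Multiset.mem_cons.1 hp2 with h | h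
    · rw [h]; rw [← fib_mem S x₁ vb]; exact hvb
    · exact hPmem p h
  have hQsum : Q.sum = (N₁, N₂) := by
    rw [msum_pair]
    have h1 : Q.map Prod.fst = T := by
      rw [hQdef]
      simp only [Multiset.map_cons, hPfst]
      rw [← hT₁, ← hT₀]
    have h2 : (Q.map Prod.snd).sum = N₂ := by
      rw [hQdef]
      simp only [Multiset.map_cons, Multiset.sum_cons, hPsnd]
      omega
    rw [h1, hTs, h2]
  have hQcard : Multiset.card Q = k := by
    rw [hQdef]
    simp only [Multiset.card_cons]
    have : Multiset.card P = Multiset.card T₁ := by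
      rw [← hPfst, Multiset.card_map]
    omega
  -- build the function
  set l : List (ℤ × ℤ) := Q.toList with hldef
  have hl : l.length = k := by rw [hldef, Multiset.length_toList, hQcard]
  apply hfree
  refine ⟨fun i => l.get ((finCongr hl.symm) i), ?_, ?_⟩
  · intro i
    apply hQmem
    rw [← Multiset.mem_toList]
    exact List.get_mem _ _
  · rw [Equiv.sum_comp (finCongr hl.symm) (fun j => l.get j)]
    rw [fin_sum_list l, hldef, Multiset.sum_toList, hQsum]

lemma sum_reflect (f : ℤ → ℤ) (d : ℤ) :
    ∑ x ∈ Finset.Icc 1 (d - 1), f (d - x) = ∑ x ∈ Finset.Icc 1 (d - 1), f x := by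
  classical
  have himg : (Finset.Icc (1:ℤ) (d-1)).image (fun x => d - x) = Finset.Icc 1 (d-1) := by
    ext y
    simp only [Finset.mem_image, Finset.mem_Icc]
    constructor
    · rintro ⟨x, hx, rfl⟩; omega
    · intro hy; exact ⟨d - y, by omega, by omega⟩
  calc ∑ x ∈ Finset.Icc (1:ℤ) (d-1), f (d - x)
      = ∑ y ∈ (Finset.Icc (1:ℤ) (d-1)).image (fun x => d - x), f y :=
        (Finset.sum_image (by intro x _ y _ e; omega)).symm
    _ = _ := by rw [himg]

lemma sum_shift (f : ℤ → ℤ) (a b c : ℤ) :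
    ∑ x ∈ Finset.Icc a b, f (x + c) = ∑ y ∈ Finset.Icc (a + c) (b + c), f y := by
  classical
  rw [← Finset.image_add_right_Icc]
  exact (Finset.sum_image (by intro x _ y _ e; have e' : x + c = y + c := e; omega)).symm

lemma constraint_pair (k j : ℕ) (hkj : k = 2 + 2 * j) (N₁ : ℤ) (hfun : ℤ → ℤ) (M : ℤ)
    (hstep : ∀ T : Multiset ℤ, Multiset.card T = k → T.sum = N₁ → M ≤ (T.map hfun).sum)
    (a b u v : ℤ) (hsum : a + b + (j : ℤ) * (u + v) = N₁) :
    M ≤ hfun a + hfun b + (j : ℤ) * (hfun u + hfun v) := by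
  have h := hstep (a ::ₘ b ::ₘ (j • (u ::ₘ v ::ₘ 0)))
    (by simp [Multiset.card_nsmul]; omega)
    (by
      simp only [Multiset.sum_cons, Multiset.sum_nsmul, Multiset.sum_zero, add_zero,
        nsmul_eq_mul]
      linarith [hsum])
  simp only [Multiset.map_cons, Multiset.map_nsmul, Multiset.map_zero, Multiset.sum_cons,
    Multiset.sum_nsmul, Multiset.sum_zero, add_zero, nsmul_eq_mul] at h
  linarith [h]

lemma constraint_triple (k j : ℕ) (hkj : k = 3 + 2 * j) (N₁ : ℤ) (hfun : ℤ → ℤ) (M : ℤ)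
    (hstep : ∀ T : Multiset ℤ, Multiset.card T = k → T.sum = N₁ → M ≤ (T.map hfun).sum)
    (a b c u v : ℤ) (hsum : a + b + c + (j : ℤ) * (u + v) = N₁) :
    M ≤ hfun a + hfun b + hfun c + (j : ℤ) * (hfun u + hfun v) := by
  have h := hstep (a ::ₘ b ::ₘ c ::ₘ (j • (u ::ₘ v ::ₘ 0)))
    (by simp [Multiset.card_nsmul]; omega)
    (by
      simp only [Multiset.sum_cons, Multiset.sum_nsmul, Multiset.sum_zero, add_zero,
        nsmul_eq_mul]
      linarith [hsum])
  simp only [Multiset.map_cons, Multiset.map_nsmul, Multiset.map_zero, Multiset.sum_cons,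
    Multiset.sum_nsmul, Multiset.sum_zero, add_zero, nsmul_eq_mul] at h
  linarith [h]

end Stmt0Aux

-- STATEMENT 0: For every integer k ≥ 2 there exists C > 0 such that for all positive
-- integers n₁, n₂, every k-sum (n₁,n₂)-free subset S of [n₁]×[n₂] satisfies
-- |S| ≤ ((k²−2)/k²)·n₁·n₂ + C·max(n₁,n₂).
set_option maxHeartbeats 1000000 in
open Stmt0Aux in
/-- For every integer k ≥ 2 there exists C > 0 such that for all positive
integers n₁, n₂, every k-sum (n₁,n₂)-free subset S of [n₁]×[n₂] satisfies
|S| ≤ ((k²−2)/k²)·n₁·n₂ + C·max(n₁,n₂). -/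
theorem stmt_0 (k : ℕ) (hk : 2 ≤ k) :
    ∃ C : ℝ, 0 < C ∧ ∀ n₁ n₂ : ℕ, 0 < n₁ → 0 < n₂ →
      ∀ S : Finset (ℤ × ℤ), S ⊆ Finset.Icc (1, 1) ((n₁ : ℤ), (n₂ : ℤ)) →
        (¬ ∃ a : Fin k → ℤ × ℤ, (∀ i, a i ∈ S) ∧ ∑ i, a i = ((n₁ : ℤ), (n₂ : ℤ))) →
        (S.card : ℝ) ≤ ((k ^ 2 - 2 : ℝ) / (k ^ 2 : ℝ)) * (n₁ * n₂) + C * (max n₁ n₂ : ℕ) := by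
  classical
  refine ⟨100, by norm_num, ?_⟩
  intro n₁ n₂ hn₁ hn₂ S hS hfree
  obtain ⟨K, hKdef⟩ : ∃ _x : ℤ, _x = (k : ℤ) := ⟨_, rfl⟩
  have hK2 : (2 : ℤ) ≤ K := by rw [hKdef]; exact_mod_cast hk
  obtain ⟨N₁, hN₁def⟩ : ∃ _x : ℤ, _x = (n₁ : ℤ) := ⟨_, rfl⟩
  obtain ⟨N₂, hN₂def⟩ : ∃ _x : ℤ, _x = (n₂ : ℤ) := ⟨_, rfl⟩
  rw [← hN₁def, ← hN₂def] at hS hfree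
  have hN₁ : 1 ≤ N₁ := by rw [hN₁def]; exact_mod_cast hn₁
  have hN₂ : 1 ≤ N₂ := by rw [hN₂def]; exact_mod_cast hn₂
  obtain ⟨mx, hmxdef⟩ : ∃ _x : ℤ, _x = ((max n₁ n₂ : ℕ) : ℤ) := ⟨_, rfl⟩
  have hmx1 : N₁ ≤ mx := by
    rw [hmxdef, hN₁def]
    exact_mod_cast Nat.le_max_left n₁ n₂
  have hmx2 : N₂ ≤ mx := by
    rw [hmxdef, hN₂def]
    exact_mod_cast Nat.le_max_right n₁ n₂
  have hmx0 : 1 ≤ mx := le_trans hN₁ hmx1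
  -- reduce to the integer inequality
  suffices hint : K ^ 2 * (S.card : ℤ) ≤ (K ^ 2 - 2) * (N₁ * N₂) + 100 * K ^ 2 * mx by
    have hK2R : (0 : ℝ) < (k : ℝ) ^ 2 := by
      have : (0 : ℝ) < (k : ℝ) := by
        have : 0 < k := by omega
        exact_mod_cast this
      positivity
    have heq : ((k : ℝ) ^ 2 - 2) / (k : ℝ) ^ 2 * ((n₁ : ℝ) * n₂) + 100 * ((max n₁ n₂ : ℕ) : ℝ)
        = (((k : ℝ) ^ 2 - 2) * ((n₁ : ℝ) * n₂) + 100 * (k : ℝ) ^ 2 * ((max n₁ n₂ : ℕ) : ℝ))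
          / (k : ℝ) ^ 2 := by
      field_simp
    rw [heq, le_div_iff₀ hK2R]
    have hcast : ((K ^ 2 * (S.card : ℤ) : ℤ) : ℝ)
        ≤ (((K ^ 2 - 2) * (N₁ * N₂) + 100 * K ^ 2 * mx : ℤ) : ℝ) := by exact_mod_cast hint
    push_cast [hKdef, hN₁def, hN₂def, hmxdef] at hcast
    push_cast
    nlinarith [hcast]
  -- trivial cardinality bound
  have hfibcard : (S.card : ℤ) = ∑ x ∈ Finset.Icc (1 : ℤ) N₁, gfun S x := by
    have h1 : S.card = ∑ x ∈ Finset.Icc (1 : ℤ) N₁, (S.filter (fun p => p.1 = x)).card := by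
      apply Finset.card_eq_sum_card_fiberwise
      intro p hp
      have := hS hp
      rw [Finset.mem_Icc] at this
      obtain ⟨ha, hb⟩ := this
      rw [Prod.le_def] at ha hb
      rw [Finset.mem_coe, Finset.mem_Icc]
      exact ⟨ha.1, hb.1⟩
    rw [h1]
    push_cast
    apply Finset.sum_congr rfl
    intro x _
    rw [gfun, fib_card]
  have hgle : ∀ x : ℤ, gfun S x ≤ N₂ := by
    intro x
    have h1 := Finset.card_le_card (fib_sub S N₁ N₂ hS x)
    have h2 : ((Finset.Icc (1:ℤ) N₂).card : ℤ) = N₂ := by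
      rw [Int.card_Icc, Int.toNat_of_nonneg (by linarith)]
      ring
    rw [gfun]
    calc ((fib S x).card : ℤ) ≤ ((Finset.Icc (1:ℤ) N₂).card : ℤ) := by exact_mod_cast h1
      _ = N₂ := h2
  have hg0 : ∀ x : ℤ, 0 ≤ gfun S x := by
    intro x
    rw [gfun]
    positivity
  obtain ⟨hfun, hfundef⟩ : ∃ _x : ℤ → ℤ, _x = fun x => N₂ - gfun S x := ⟨_, rfl⟩
  have hh0 : ∀ x : ℤ, 0 ≤ hfun x := by
    intro x
    rw [hfundef]
    simp only
    linarith [hgle x]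
  obtain ⟨SH, hSSdef⟩ : ∃ _x : ℤ, _x = ∑ x ∈ Finset.Icc (1 : ℤ) N₁, hfun x := ⟨_, rfl⟩
  have hSS : SH = N₁ * N₂ - S.card := by
    rw [hSSdef, hfundef]
    rw [Finset.sum_sub_distrib, Finset.sum_const]
    have hcard : (((Finset.Icc (1:ℤ) N₁).card) : ℤ) = N₁ := by
      rw [Int.card_Icc, Int.toNat_of_nonneg (by linarith)]
      ring
    rw [hfibcard]
    rw [nsmul_eq_mul, hcard]
  have hScard : (S.card : ℤ) ≤ N₁ * N₂ := by
    have hSS0 : 0 ≤ SH := by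
      rw [hSSdef]
      apply Finset.sum_nonneg
      intro x _
      exact hh0 x
    linarith [hSS]
  -- trivial cases
  have t0 : K ^ 2 * (S.card : ℤ) ≤ K ^ 2 * (N₁ * N₂) :=
    mul_le_mul_of_nonneg_left hScard (by positivity)
  by_cases hsmall : N₁ < 4 * K ^ 2 ∨ N₂ < K
  · rcases hsmall with h | h
    · have t1 : 0 ≤ (4 * K ^ 2 - N₁) * N₂ := mul_nonneg (by linarith) (by linarith)
      have t2 : 0 ≤ K ^ 2 * (mx - N₂) := mul_nonneg (by positivity) (by linarith)
      have t3 : 0 ≤ K ^ 2 * mx := mul_nonneg (by positivity) (by linarith)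
      nlinarith [t0, t1, t2, t3]
    · have t1 : 0 ≤ N₁ * (K - N₂) := mul_nonneg (by linarith) (by linarith)
      have t2 : 0 ≤ (mx - N₁) * K := mul_nonneg (by linarith) (by linarith)
      have t3 : 0 ≤ K * (K - 2) * mx := by
        apply mul_nonneg (mul_nonneg (by linarith) (by linarith)) (by linarith)
      have t4 : 0 ≤ K ^ 2 * mx := mul_nonneg (by positivity) (by linarith)
      nlinarith [t0, t1, t2, t3, t4]
  push_neg at hsmall
  obtain ⟨hbig1, hbig2⟩ := hsmall
  obtain ⟨M, hMdef⟩ : ∃ _x : ℤ, _x = N₂ - K + 1 := ⟨_, rfl⟩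
  have hM1 : 1 ≤ M := by omega
  -- the composition constraint
  have hstep : ∀ T : Multiset ℤ, Multiset.card T = k → T.sum = N₁ →
      M ≤ (T.map hfun).sum := by
    intro T hc hs
    rw [hMdef, hKdef, hfundef]
    exact step2 k hk N₁ N₂ hN₂ S hS hfree T hc hs
  -- key inequality
  have hkey : 2 * N₁ * M - 10 * K ^ 2 * M ≤ K ^ 2 * SH := by
    have hKpos : (0:ℤ) < K := by linarith
    have hK20 : (0:ℤ) ≤ K ^ 2 := by positivity
    have hM0 : (0:ℤ) ≤ M := by linarith
    obtain ⟨s, hsdef⟩ : ∃ _x : ℤ, _x = (2 * N₁) / K := ⟨_, rfl⟩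
    have hs1 : K * s ≤ 2 * N₁ := by
      rw [hsdef, mul_comm]
      exact Int.ediv_mul_le (2 * N₁) (by omega)
    have hs2 : 2 * N₁ < K * s + K := by
      have h := Int.lt_ediv_add_one_mul_self (2 * N₁) hKpos
      rw [← hsdef] at h
      linarith only [h]
    have hs3 : 3 ≤ s := by
      by_contra hcon
      push_neg at hcon
      have h1 : s ≤ 2 := by omega
      have h2 : K * s ≤ K * 2 := mul_le_mul_of_nonneg_left h1 hKpos.le
      have e : 0 ≤ 8 * K * (K - 2) := mul_nonneg (by linarith only [hKpos]) (by linarith only [hK2])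
      linarith only [h2, hs2, hbig1, e, hKpos]
    have hsN₁ : s ≤ N₁ := by
      have h1 : K * s ≤ K * N₁ := by
        have e : 0 ≤ (K - 2) * N₁ := mul_nonneg (by linarith only [hK2]) (by linarith only [hN₁])
        linarith only [hs1, e]
      exact le_of_mul_le_mul_left h1 hKpos
    have hne : (Finset.Icc (1:ℤ) (s-1)).Nonempty := ⟨1, by rw [Finset.mem_Icc]; omega⟩
    obtain ⟨xs, hxsmem, hxsmin⟩ :=
      Finset.exists_min_image (Finset.Icc (1:ℤ) (s-1)) (fun x => hfun x + hfun (s - x)) hne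
    obtain ⟨p, hpdef⟩ : ∃ _x : ℤ, _x = hfun xs + hfun (s - xs) := ⟨_, rfl⟩
    have hp0 : 0 ≤ p := by
      have h1 := hh0 xs
      have h2 := hh0 (s - xs)
      rw [hpdef]
      linarith
    -- generic pair-sum machinery
    have pairsum : ∀ d q : ℤ, 2 ≤ d → d ≤ N₁ →
        (∀ x ∈ Finset.Icc (1:ℤ) (d-1), q ≤ hfun x + hfun (d - x)) →
        (d - 1) * q ≤ 2 * SH := by
      intro d q hd2 hdN hq
      have h1 : (Finset.Icc (1:ℤ) (d-1)).card • q
          ≤ ∑ x ∈ Finset.Icc (1:ℤ) (d-1), (hfun x + hfun (d - x)) :=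
        Finset.card_nsmul_le_sum _ _ _ hq
      have hc : (((Finset.Icc (1:ℤ) (d-1)).card : ℤ)) = d - 1 := by
        rw [Int.card_Icc, Int.toNat_of_nonneg (by omega)]
        ring
      rw [nsmul_eq_mul, hc] at h1
      have h2 : ∑ x ∈ Finset.Icc (1:ℤ) (d-1), (hfun x + hfun (d - x))
          = 2 * ∑ x ∈ Finset.Icc (1:ℤ) (d-1), hfun x := by
        rw [Finset.sum_add_distrib, sum_reflect]
        ring
      have h3 : ∑ x ∈ Finset.Icc (1:ℤ) (d-1), hfun x ≤ SH := by
        rw [hSSdef]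
        apply Finset.sum_le_sum_of_subset_of_nonneg
        · intro x hx
          rw [Finset.mem_Icc] at hx ⊢
          omega
        · intro x _ _
          exact hh0 x
      rw [h2] at h1
      linarith [h1, h3]
    have finish_pairs : ∀ d q : ℤ, 2 ≤ d → d ≤ N₁ → s ≤ d → 2 * M ≤ K * q → 0 ≤ q →
        (∀ x ∈ Finset.Icc (1:ℤ) (d-1), q ≤ hfun x + hfun (d - x)) →
        2 * N₁ * M - 10 * K ^ 2 * M ≤ K ^ 2 * SH := by
      intro d q hd2 hdN hsd hKq hq0 hq
      have h1 : (d - 1) * q ≤ 2 * SH := pairsum d q hd2 hdN hq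
      have h4 : 2 * N₁ - 2 * K ≤ K * (d - 1) := by
        have h40 := mul_nonneg hKpos.le (sub_nonneg.2 hsd)
        linarith only [hs2, h40]
      have h5 : (2 * N₁ - 2 * K) * (2 * M) ≤ (K * (d-1)) * (2 * M) :=
        mul_le_mul_of_nonneg_right h4 (by linarith)
      have h6 : (K * (d-1)) * (2*M) ≤ (K * (d-1)) * (K * q) := by
        apply mul_le_mul_of_nonneg_left hKq
        have : (0:ℤ) ≤ d - 1 := by omega
        exact mul_nonneg hKpos.le this
      have h7 : K ^ 2 * ((d-1) * q) ≤ K ^ 2 * (2 * SH) :=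
        mul_le_mul_of_nonneg_left h1 hK20
      have h8 : 0 ≤ (10*K^2 - 2*K) * M := by
        apply mul_nonneg _ hM0
        have e : 0 ≤ (10 * K - 2) * K := mul_nonneg (by linarith only [hK2]) (by linarith only [hKpos])
        linarith only [e]
      linarith only [h5, h6, h7, h8]
    rcases Nat.even_or_odd k with ⟨r, hr⟩ | ⟨r, hr⟩
    · -- k even : k = r + r
      have hr1 : 1 ≤ r := by omega
      have hr1' : (1:ℤ) ≤ (r:ℤ) := by exact_mod_cast hr1
      have hKr : K = 2 * (r:ℤ) := by
        rw [hKdef]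
        push_cast [hr]
        ring
      have hj : ((r - 1 : ℕ) : ℤ) = (r:ℤ) - 1 := by omega
      by_cases hA : 2 * M ≤ K * p
      · exact finish_pairs s p (by omega) hsN₁ le_rfl hA hp0 (fun x hx => by rw [hpdef]; exact hxsmin x hx)
      · push_neg at hA
        obtain ⟨s', hs'def⟩ : ∃ _x : ℤ, _x = N₁ - ((r:ℤ) - 1) * s := ⟨_, rfl⟩
        have hrsle : (r:ℤ) * s ≤ N₁ := by
          have e : K * s = 2 * ((r:ℤ) * s) := by rw [hKr]; ring
          linarith only [hs1, e]
        have hs'ge : s ≤ s' := by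
          rw [hs'def]
          have e : ((r:ℤ) - 1) * s = (r:ℤ) * s - s := by ring
          linarith only [hrsle, e]
        have hs'le : s' ≤ N₁ := by
          rw [hs'def]
          have h0 : 0 ≤ ((r:ℤ) - 1) * s := mul_nonneg (by linarith) (by linarith)
          linarith
        obtain ⟨q₂, hq₂def⟩ : ∃ _x : ℤ, _x = M - ((r:ℤ) - 1) * p := ⟨_, rfl⟩
        have hq₂ : 2 * M ≤ K * q₂ := by
          have hA' : K * p + 1 ≤ 2 * M := Int.lt_iff_add_one_le.mp hA
          have h1 : ((r:ℤ) - 1) * (K * p) ≤ ((r:ℤ) - 1) * (2 * M - 1) :=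
            mul_le_mul_of_nonneg_left (by linarith) (by linarith)
          rw [hq₂def]
          have e : K * (M - ((r:ℤ) - 1) * p) = K * M - ((r:ℤ) - 1) * (K * p) := by ring
          have e2 : ((r:ℤ) - 1) * (2 * M - 1) = (K - 2) * M - ((r:ℤ) - 1) := by rw [hKr]; ring
          have e3 : K * M = 2 * M + (K - 2) * M := by ring
          linarith only [h1, e, e2, e3, hr1']
        have hq₂0 : 0 ≤ q₂ := by
          by_contra hcon
          push_neg at hcon
          have h1 : K * q₂ < 0 := mul_neg_of_pos_of_neg hKpos hcon
          linarith only [hq₂, hM1, h1]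
        have hpt : ∀ x ∈ Finset.Icc (1:ℤ) (s'-1), q₂ ≤ hfun x + hfun (s' - x) := by
          intro x _
          have hc := constraint_pair k (r-1) (by omega) N₁ hfun M hstep x (s' - x) xs (s - xs)
            (by rw [hj, hs'def]; ring)
          rw [hj] at hc
          rw [← hpdef] at hc
          rw [hq₂def]
          linarith only [hc]
        exact finish_pairs s' q₂ (by omega) hs'le hs'ge hq₂ hq₂0 hpt
    · -- k odd : k = 2r + 1
      have hr1 : 1 ≤ r := by omega
      have hr1' : (1:ℤ) ≤ (r:ℤ) := by exact_mod_cast hr1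
      have hKr : K = 2 * (r:ℤ) + 1 := by
        rw [hKdef]
        push_cast [hr]
        ring
      have hj : ((r - 1 : ℕ) : ℤ) = (r:ℤ) - 1 := by omega
      by_cases hA : 2 * M ≤ K * p
      · exact finish_pairs s p (by omega) hsN₁ le_rfl hA hp0 (fun x hx => by rw [hpdef]; exact hxsmin x hx)
      · push_neg at hA
        obtain ⟨τ, hτdef⟩ : ∃ _x : ℤ, _x = N₁ - ((r:ℤ) - 1) * s := ⟨_, rfl⟩
        have hτ1 : 3 * N₁ ≤ K * τ := by
          have h1 : ((r:ℤ) - 1) * (K * s) ≤ ((r:ℤ) - 1) * (2 * N₁) :=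
            mul_le_mul_of_nonneg_left hs1 (by linarith)
          rw [hτdef]
          have e : K * (N₁ - ((r:ℤ) - 1) * s) = K * N₁ - ((r:ℤ) - 1) * (K * s) := by ring
          have e2 : K * N₁ = 2 * (r:ℤ) * N₁ + N₁ := by rw [hKr]; ring
          linarith only [h1, e, e2]
        have hτle : τ ≤ N₁ := by
          rw [hτdef]
          have h0 : 0 ≤ ((r:ℤ) - 1) * s := mul_nonneg (by linarith) (by linarith)
          linarith
        have hτ24 : 24 ≤ τ := by
          have e3 : 0 ≤ 12 * K * (K - 2) := mul_nonneg (by linarith only [hKpos]) (by linarith only [hK2])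
          have h1 : 24 * K ≤ K * τ := by linarith only [hτ1, hbig1, e3]
          by_contra hcon
          push_neg at hcon
          have h2 : K * τ ≤ K * 23 := mul_le_mul_of_nonneg_left (by omega) hKpos.le
          linarith only [h1, h2, hKpos]
        obtain ⟨X, hXdef⟩ : ∃ _x : ℤ, _x = (τ - 2) / 3 := ⟨_, rfl⟩
        have hX1 : 3 * X ≤ τ - 2 := by
          rw [hXdef, mul_comm]
          exact Int.ediv_mul_le (τ - 2) (by norm_num)
        have hX2 : τ - 2 < 3 * X + 3 := by
          have h := Int.lt_ediv_add_one_mul_self (τ - 2) (by norm_num : (0:ℤ) < 3)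
          rw [← hXdef] at h
          linarith only [h]
        have hX0 : 1 ≤ X := by omega
        have h2X : 2 * X + 1 ≤ N₁ := by omega
        obtain ⟨q₃, hq₃def⟩ : ∃ _x : ℤ, _x = M - ((r:ℤ) - 1) * p := ⟨_, rfl⟩
        have hq₃ : 3 * M ≤ K * q₃ := by
          have hA' : K * p + 1 ≤ 2 * M := Int.lt_iff_add_one_le.mp hA
          have h1 : ((r:ℤ) - 1) * (K * p) ≤ ((r:ℤ) - 1) * (2 * M - 1) :=
            mul_le_mul_of_nonneg_left (by linarith) (by linarith)
          rw [hq₃def]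
          have e : K * (M - ((r:ℤ) - 1) * p) = K * M - ((r:ℤ) - 1) * (K * p) := by ring
          have e2 : ((r:ℤ) - 1) * (2 * M - 1) = (K - 3) * M - ((r:ℤ) - 1) := by rw [hKr]; ring
          have e3 : K * M = 3 * M + (K - 3) * M := by ring
          linarith only [h1, e, e2, e3, hr1']
        have hq₃0 : 0 ≤ q₃ := by
          by_contra hcon
          push_neg at hcon
          have h1 : K * q₃ < 0 := mul_neg_of_pos_of_neg hKpos hcon
          linarith only [hq₃, hM1, h1]
        have hpt1 : ∀ x ∈ Finset.Icc (1:ℤ) X,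
            q₃ ≤ hfun x + hfun (x + X) + hfun (τ - X - 2*x) := by
          intro x _
          have hc := constraint_triple k (r-1) (by omega) N₁ hfun M hstep
            x (x + X) (τ - X - 2*x) xs (s - xs) (by rw [hj, hτdef]; ring)
          rw [hj] at hc
          rw [← hpdef] at hc
          rw [hq₃def]
          linarith only [hc]
        have hpt2 : ∀ x ∈ Finset.Icc (1:ℤ) X,
            q₃ ≤ hfun x + hfun (x + (X+1)) + hfun (τ - X - 1 - 2*x) := by
          intro x _
          have hc := constraint_triple k (r-1) (by omega) N₁ hfun M hstep
            x (x + (X+1)) (τ - X - 1 - 2*x) xs (s - xs) (by rw [hj, hτdef]; ring)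
          rw [hj] at hc
          rw [← hpdef] at hc
          rw [hq₃def]
          linarith only [hc]
        have hcX : (((Finset.Icc (1:ℤ) X).card : ℤ)) = X := by
          rw [Int.card_Icc, Int.toNat_of_nonneg (by omega)]
          ring
        have hS1 : X * q₃ ≤ ∑ x ∈ Finset.Icc (1:ℤ) X,
            (hfun x + hfun (x + X) + hfun (τ - X - 2*x)) := by
          have h := Finset.card_nsmul_le_sum (Finset.Icc (1:ℤ) X)
            (fun x => hfun x + hfun (x + X) + hfun (τ - X - 2*x)) q₃ hpt1
          rwa [nsmul_eq_mul, hcX] at h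
        have hS2 : X * q₃ ≤ ∑ x ∈ Finset.Icc (1:ℤ) X,
            (hfun x + hfun (x + (X+1)) + hfun (τ - X - 1 - 2*x)) := by
          have h := Finset.card_nsmul_le_sum (Finset.Icc (1:ℤ) X)
            (fun x => hfun x + hfun (x + (X+1)) + hfun (τ - X - 1 - 2*x)) q₃ hpt2
          rwa [nsmul_eq_mul, hcX] at h
        have hsplit1 : ∑ x ∈ Finset.Icc (1:ℤ) X, (hfun x + hfun (x + X) + hfun (τ - X - 2*x))
            = (∑ x ∈ Finset.Icc (1:ℤ) X, hfun x) + (∑ x ∈ Finset.Icc (1:ℤ) X, hfun (x + X))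
              + (∑ x ∈ Finset.Icc (1:ℤ) X, hfun (τ - X - 2*x)) := by
          rw [Finset.sum_add_distrib, Finset.sum_add_distrib]
        have hsplit2 : ∑ x ∈ Finset.Icc (1:ℤ) X, (hfun x + hfun (x + (X+1)) + hfun (τ - X - 1 - 2*x))
            = (∑ x ∈ Finset.Icc (1:ℤ) X, hfun x) + (∑ x ∈ Finset.Icc (1:ℤ) X, hfun (x + (X+1)))
              + (∑ x ∈ Finset.Icc (1:ℤ) X, hfun (τ - X - 1 - 2*x)) := by
          rw [Finset.sum_add_distrib, Finset.sum_add_distrib]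
        have hb1 : ∑ x ∈ Finset.Icc (1:ℤ) X, hfun (x + X)
            = ∑ y ∈ Finset.Icc (1+X) (X+X), hfun y := sum_shift hfun 1 X X
        have hb2 : ∑ x ∈ Finset.Icc (1:ℤ) X, hfun (x + (X+1))
            = ∑ y ∈ Finset.Icc (1+(X+1)) (X+(X+1)), hfun y := sum_shift hfun 1 X (X+1)
        obtain ⟨E₁, hE₁⟩ : ∃ _x : Finset ℤ, _x = (Finset.Icc (1:ℤ) X).image (fun x => τ - X - 2*x) := ⟨_, rfl⟩
        obtain ⟨E₂, hE₂⟩ : ∃ _x : Finset ℤ, _x = (Finset.Icc (1:ℤ) X).image (fun x => τ - X - 1 - 2*x) := ⟨_, rfl⟩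
        have hz1 : ∑ x ∈ Finset.Icc (1:ℤ) X, hfun (τ - X - 2*x) = ∑ y ∈ E₁, hfun y := by
          rw [hE₁]
          exact (Finset.sum_image (by intro x _ y _ e; have e' : τ - X - 2*x = τ - X - 2*y := e; omega)).symm
        have hz2 : ∑ x ∈ Finset.Icc (1:ℤ) X, hfun (τ - X - 1 - 2*x) = ∑ y ∈ E₂, hfun y := by
          rw [hE₂]
          exact (Finset.sum_image (by intro x _ y _ e; have e' : τ - X - 1 - 2*x = τ - X - 1 - 2*y := e; omega)).symm
        have hdisj12 : Disjoint E₁ E₂ := by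
          rw [Finset.disjoint_left]
          intro y hy1 hy2
          rw [hE₁, Finset.mem_image] at hy1
          rw [hE₂, Finset.mem_image] at hy2
          obtain ⟨x1, _, e1⟩ := hy1
          obtain ⟨x2, _, e2⟩ := hy2
          omega
        have hEsub : E₁ ∪ E₂ ⊆ Finset.Icc (1:ℤ) N₁ := by
          intro y hy
          rcases Finset.mem_union.1 hy with h | h
          · rw [hE₁, Finset.mem_image] at h
            obtain ⟨x, hx, rfl⟩ := h
            rw [Finset.mem_Icc] at hx ⊢
            omega
          · rw [hE₂, Finset.mem_image] at h
            obtain ⟨x, hx, rfl⟩ := h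
            rw [Finset.mem_Icc] at hx ⊢
            omega
        have hzle : (∑ y ∈ E₁, hfun y) + (∑ y ∈ E₂, hfun y) ≤ SH := by
          rw [← Finset.sum_union hdisj12, hSSdef]
          apply Finset.sum_le_sum_of_subset_of_nonneg hEsub
          intro x _ _
          exact hh0 x
        have hab1 : (∑ x ∈ Finset.Icc (1:ℤ) X, hfun x)
            + (∑ y ∈ Finset.Icc (1+X) (X+X), hfun y) ≤ SH := by
          have hd : Disjoint (Finset.Icc (1:ℤ) X) (Finset.Icc (1+X) (X+X)) := by
            rw [Finset.disjoint_left]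
            intro y h1 h2
            rw [Finset.mem_Icc] at h1 h2
            omega
          rw [← Finset.sum_union hd, hSSdef]
          apply Finset.sum_le_sum_of_subset_of_nonneg
          · intro y hy
            rcases Finset.mem_union.1 hy with h | h <;>
              (rw [Finset.mem_Icc] at h ⊢; omega)
          · intro x _ _
            exact hh0 x
        have hab2 : (∑ x ∈ Finset.Icc (1:ℤ) X, hfun x)
            + (∑ y ∈ Finset.Icc (1+(X+1)) (X+(X+1)), hfun y) ≤ SH := by
          have hd : Disjoint (Finset.Icc (1:ℤ) X) (Finset.Icc (1+(X+1)) (X+(X+1))) := by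
            rw [Finset.disjoint_left]
            intro y h1 h2
            rw [Finset.mem_Icc] at h1 h2
            omega
          rw [← Finset.sum_union hd, hSSdef]
          apply Finset.sum_le_sum_of_subset_of_nonneg
          · intro y hy
            rcases Finset.mem_union.1 hy with h | h <;>
              (rw [Finset.mem_Icc] at h ⊢; omega)
          · intro x _ _
            exact hh0 x
        have hup : (2:ℤ) * (X * q₃) ≤ 3 * SH := by
          have e1 := hS1
          have e2 := hS2
          rw [hsplit1, hb1, hz1] at e1
          rw [hsplit2, hb2, hz2] at e2
          linarith only [e1, e2, hab1, hab2, hzle]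
        have g3 : N₁ - 2*K ≤ K * X := by
          have h30 : (0:ℤ) ≤ 3*X - (τ - 4) := by omega
          have h31 := mul_nonneg hKpos.le h30
          have e : K * (3*X - (τ - 4)) = 3 * (K * X) - K * τ + 4 * K := by ring
          linarith only [h31, hτ1, e, hKpos]
        have gKX0 : 0 ≤ K * X := mul_nonneg hKpos.le (by omega)
        have gmul : (N₁ - 2*K) * (3*M) ≤ (K*X) * (K*q₃) :=
          mul_le_mul g3 hq₃ (by linarith) gKX0
        have g7 : K^2 * (2*(X*q₃)) ≤ K^2 * (3*SH) := mul_le_mul_of_nonneg_left hup hK20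
        have g8 : 4*K*M ≤ 10*K^2*M := by
          have h80 : (0:ℤ) ≤ 10*K^2 - 4*K := by
            have e : 0 ≤ (10 * K - 4) * K := mul_nonneg (by linarith only [hK2]) (by linarith only [hKpos])
            linarith only [e]
          have h81 := mul_nonneg h80 hM0
          linarith only [h81]
        linarith only [gmul, g7, g8]
  -- assemble
  rw [hSS] at hkey
  have hMmx : M ≤ mx := by omega
  have hK20 : (0:ℤ) ≤ K ^ 2 := by positivity
  have hKsq : K - 1 ≤ K ^ 2 := by nlinarith [hK2]
  have e1 : 10 * K ^ 2 * M ≤ 10 * K ^ 2 * mx := by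
    have := mul_le_mul_of_nonneg_left hMmx (by linarith : (0:ℤ) ≤ 10 * K ^ 2)
    linarith [this]
  have e2 : 2 * N₁ * (K - 1) ≤ 2 * mx * K ^ 2 := by
    have h21 : 2 * N₁ ≤ 2 * mx := by linarith
    have h22 : (0:ℤ) ≤ K - 1 := by linarith
    have h23 : (0:ℤ) ≤ 2 * mx := by linarith
    have := mul_le_mul h21 hKsq h22 h23
    linarith [this]
  have e3 : 0 ≤ K ^ 2 * mx := mul_nonneg hK20 (by linarith)
  nlinarith [hkey, e1, e2, e3]
end

section
/- For every integer k ≥ 2 and all positive integers n₁ and n₂, there exists a k-sum (n₁,n₂)-free subset S of [n₁]×[n₂] with |S| ≥ n₁·n₂ − 2·n₁·n₂/k² (an inequality between real numbers). -/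
private lemma gauss_nat (n : ℕ) : ∑ i ∈ Finset.range n, ((i:ℝ)+1) = n*(n+1)/2 := by
  induction n with
  | zero => simp
  | succ n ih => rw [Finset.sum_range_succ, ih]; push_cast; ring

private lemma gauss_int (M : ℤ) (hM : 0 ≤ M) :
    ∑ x ∈ Finset.Icc (1:ℤ) M, (x : ℝ) = M * (M + 1) / 2 := by
  obtain ⟨n, rfl⟩ := Int.eq_ofNat_of_zero_le hM
  have hinjf : Function.Injective (fun i : ℕ => (i:ℤ)+1) := fun a b h => by simp only at h; omega
  have hmap : Finset.Icc (1:ℤ) (n:ℤ)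
      = Finset.map ⟨fun i : ℕ => (i:ℤ)+1, hinjf⟩
          (Finset.range n) := by
    ext x
    simp only [Finset.mem_Icc, Finset.mem_map, Finset.mem_range, Function.Embedding.coeFn_mk]
    constructor
    · rintro ⟨hx1, hx2⟩
      exact ⟨(x-1).toNat, by omega, by omega⟩
    · rintro ⟨a, ha, rfl⟩
      omega
  rw [hmap, Finset.sum_map]
  simp only [Function.Embedding.coeFn_mk]
  push_cast
  rw [gauss_nat n]

private lemma sum_linear (a b c : ℝ) (M : ℤ) (hM : 0 ≤ M) :
    ∑ x ∈ Finset.Icc (1:ℤ) M, (a - b*(x:ℝ))/c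
      = ((M:ℝ)*a - b*((M:ℝ)*((M:ℝ)+1)/2))/c := by
  rw [← Finset.sum_div]
  congr 1
  rw [Finset.sum_sub_distrib, Finset.sum_const, ← Finset.mul_sum, gauss_int M hM,
    Int.card_Icc]
  have h1 : ((M + 1 - 1).toNat : ℝ) = (M:ℝ) := by
    rw [show M + 1 - 1 = M from by ring]
    exact_mod_cast Int.toNat_of_nonneg hM
  rw [nsmul_eq_mul, h1]

private lemma final_bound (K N₁ N₂ M : ℝ) (hK : 2 ≤ K) (h1 : 0 < N₁) (h2 : 0 < N₂)
    (hM : 0 ≤ M) (hKM : K*M ≤ 2*N₁) :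
    (M * (2*N₁*N₂) - K*N₂*(M*(M+1)/2)) / (K*N₁) ≤ 2*(N₁*N₂)/K^2 := by
  have hKpos : (0:ℝ) < K := by linarith
  have hA : (0:ℝ) ≤ K*N₂*(2*N₁ - K*M)^2 := by positivity
  have hB : (0:ℝ) ≤ K*N₂*(K^2*M) := by positivity
  rw [div_le_div_iff₀ (by positivity) (by positivity)]
  nlinarith [hA, hB]

/-- For every integer k ≥ 2 and positive integers n₁, n₂, there exists a
k-sum (n₁,n₂)-free subset S of [n₁]×[n₂] with |S| ≥ n₁·n₂ − 2·n₁·n₂/k². -/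
theorem stmt_1 (k n₁ n₂ : ℕ) (hk : 2 ≤ k) (h₁ : 0 < n₁) (h₂ : 0 < n₂) :
    ∃ S : Finset (ℤ × ℤ), S ⊆ Finset.Icc (1, 1) ((n₁ : ℤ), (n₂ : ℤ)) ∧
      (¬ ∃ a : Fin k → ℤ × ℤ, (∀ i, a i ∈ S) ∧ ∑ i, a i = ((n₁ : ℤ), (n₂ : ℤ))) ∧
      (S.card : ℝ) ≥ (n₁ : ℝ) * n₂ - 2 * ((n₁ : ℝ) * n₂) / (k ^ 2 : ℝ) := by
  set N₁ : ℤ := (n₁ : ℤ) with hN₁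
  set N₂ : ℤ := (n₂ : ℤ) with hN₂
  set K : ℤ := (k : ℤ) with hK
  have hN₁pos : 0 < N₁ := by rw [hN₁]; exact_mod_cast h₁
  have hN₂pos : 0 < N₂ := by rw [hN₂]; exact_mod_cast h₂
  have hK2 : 2 ≤ K := by rw [hK]; exact_mod_cast hk
  have hKpos : 0 < K := by omega
  set B : Finset (ℤ × ℤ) := Finset.Icc (1, 1) (N₁, N₂) with hB
  set S : Finset (ℤ × ℤ) :=
    B.filter (fun p => 2 * N₁ * N₂ < K * (N₂ * p.1 + N₁ * p.2)) with hS
  set T : Finset (ℤ × ℤ) :=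
    B.filter (fun p => ¬ (2 * N₁ * N₂ < K * (N₂ * p.1 + N₁ * p.2))) with hT
  refine ⟨S, Finset.filter_subset _ _, ?_, ?_⟩
  · rintro ⟨a, ha, hsum⟩
    have hlt : ∀ i : Fin k, 2 * N₁ * N₂ < K * (N₂ * (a i).1 + N₁ * (a i).2) := by
      intro i
      exact (Finset.mem_filter.mp (ha i)).2
    have hne : (Finset.univ : Finset (Fin k)).Nonempty :=
      ⟨⟨0, by omega⟩, Finset.mem_univ _⟩
    have hsum' : ∑ _i : Fin k, (2 * N₁ * N₂) <
        ∑ i : Fin k, K * (N₂ * (a i).1 + N₁ * (a i).2) :=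
      Finset.sum_lt_sum_of_nonempty hne fun i _ => hlt i
    have h1 : ∑ i : Fin k, (a i).1 = N₁ := by
      rw [← Prod.fst_sum, hsum]
    have h2 : ∑ i : Fin k, (a i).2 = N₂ := by
      rw [← Prod.snd_sum, hsum]
    have hexp : ∑ i : Fin k, K * (N₂ * (a i).1 + N₁ * (a i).2)
        = K * (N₂ * N₁ + N₁ * N₂) := by
      rw [← Finset.mul_sum, Finset.sum_add_distrib, ← Finset.mul_sum, ← Finset.mul_sum,
        h1, h2]
    rw [hexp, Finset.sum_const, Finset.card_univ, Fintype.card_fin, nsmul_eq_mul] at hsum'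
    rw [← hK] at hsum'
    nlinarith [mul_pos hN₁pos hN₂pos]
  · -- cardinality bound
    have hBcard : B.card = n₁ * n₂ := by
      have hBe : B = Finset.Icc (1:ℤ) N₁ ×ˢ Finset.Icc (1:ℤ) N₂ := rfl
      rw [hBe, Finset.card_product, Int.card_Icc, Int.card_Icc]
      have e1 : (N₁+1-1).toNat = n₁ := by rw [hN₁]; omega
      have e2 : (N₂+1-1).toNat = n₂ := by rw [hN₂]; omega
      rw [e1, e2]
    have hST : S.card + T.card = n₁ * n₂ := by
      rw [hS, hT, Finset.card_filter_add_card_filter_not, hBcard]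
    set M : ℤ := 2 * N₁ / K with hM
    have hKM : K * M ≤ 2 * N₁ := by
      rw [hM, mul_comm]
      exact Int.ediv_mul_le _ (by omega)
    have hM0 : 0 ≤ M := Int.ediv_nonneg (by omega) (by omega)
    have hfiber : ∀ p ∈ T, p.1 ∈ Finset.Icc (1:ℤ) M := by
      rintro ⟨x, y⟩ hp
      rw [hT, Finset.mem_filter] at hp
      obtain ⟨hpB, hple⟩ := hp
      rw [hB, Finset.mem_Icc, Prod.mk_le_mk, Prod.mk_le_mk] at hpB
      obtain ⟨⟨hx1, hy1⟩, ⟨hx2, hy2⟩⟩ := hpB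
      simp only [not_lt] at hple
      rw [Finset.mem_Icc]
      refine ⟨hx1, ?_⟩
      show x ≤ M
      rw [hM, Int.le_ediv_iff_mul_le hKpos]
      by_contra hcon
      push_neg at hcon
      have h6 : (2*N₁+1) * N₂ ≤ (x*K)*N₂ :=
        mul_le_mul_of_nonneg_right (by omega) hN₂pos.le
      have h7 : K*N₁ ≤ K*N₁*y := le_mul_of_one_le_right (by positivity) hy1
      nlinarith [mul_pos hKpos hN₁pos]
    have hTcard : T.card = ∑ x ∈ Finset.Icc (1:ℤ) M,
        (T.filter (fun p => p.1 = x)).card :=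
      Finset.card_eq_sum_card_fiberwise hfiber
    have hfibbound : ∀ x ∈ Finset.Icc (1:ℤ) M,
        ((T.filter (fun p => p.1 = x)).card : ℝ) ≤
          (2 * (N₁:ℝ) * N₂ - K * N₂ * x) / (K * N₁) := by
      intro x hx
      rw [Finset.mem_Icc] at hx
      set yx : ℤ := (2 * N₁ * N₂ - K * N₂ * x) / (K * N₁) with hyx
      have hsub : ∀ p ∈ T.filter (fun p => p.1 = x), p.2 ∈ Finset.Icc (1:ℤ) yx := by
        rintro ⟨x', y⟩ hp
        rw [Finset.mem_filter, hT, Finset.mem_filter] at hp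
        obtain ⟨⟨hpB, hple⟩, hx'⟩ := hp
        simp only at hx'
        subst hx'
        rw [hB, Finset.mem_Icc, Prod.mk_le_mk, Prod.mk_le_mk] at hpB
        obtain ⟨⟨hx1, hy1⟩, ⟨hx2, hy2⟩⟩ := hpB
        simp only [not_lt] at hple
        rw [Finset.mem_Icc]
        refine ⟨hy1, ?_⟩
        show y ≤ yx
        rw [hyx, Int.le_ediv_iff_mul_le (by positivity)]
        nlinarith
      have hinj : Set.InjOn (fun p : ℤ × ℤ => p.2) (T.filter (fun p => p.1 = x)) := by
        rintro ⟨a1, a2⟩ ha ⟨b1, b2⟩ hb hab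
        simp only [Finset.coe_filter, Set.mem_setOf_eq] at ha hb
        simp only at hab
        simp [ha.2, hb.2, hab]
      have hcardle : (T.filter (fun p => p.1 = x)).card ≤ (Finset.Icc (1:ℤ) yx).card :=
        Finset.card_le_card_of_injOn _ hsub hinj
      rw [Int.card_Icc] at hcardle
      have hKxr : (K:ℝ) * x ≤ 2 * N₁ := by
        have : K * x ≤ K * M := by
          have := hx.2
          exact mul_le_mul_of_nonneg_left this (by omega)
        exact_mod_cast le_trans this hKM
      have hN₂r : (0:ℝ) < (N₂:ℝ) := by exact_mod_cast hN₂pos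
      have hN₁r : (0:ℝ) < (N₁:ℝ) := by exact_mod_cast hN₁pos
      have hKr : (0:ℝ) < (K:ℝ) := by exact_mod_cast hKpos
      have h1 : ((yx + 1 - 1).toNat : ℝ) ≤ (2 * (N₁:ℝ) * N₂ - K * N₂ * x) / (K * N₁) := by
        have hrhs0 : (0:ℝ) ≤ (2 * (N₁:ℝ) * N₂ - K * N₂ * x) / (K * N₁) := by
          apply div_nonneg _ (by positivity)
          nlinarith
        rcases le_or_gt yx 0 with h | h
        · have hz : (yx + 1 - 1).toNat = 0 := by omega
          rw [hz]; simpa using hrhs0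
        · have htn : ((yx + 1 - 1).toNat : ℝ) = (yx : ℝ) := by
            rw [show yx + 1 - 1 = yx from by ring]
            exact_mod_cast Int.toNat_of_nonneg h.le
          rw [htn, le_div_iff₀ (by positivity)]
          have hed := Int.ediv_mul_le (2 * N₁ * N₂ - K * N₂ * x) (b := K * N₁)
            (by positivity)
          rw [← hyx] at hed
          exact_mod_cast hed
      calc ((T.filter (fun p => p.1 = x)).card : ℝ)
          ≤ ((yx + 1 - 1).toNat : ℝ) := by exact_mod_cast hcardle
        _ ≤ _ := h1
    have hTbound : (T.card : ℝ) ≤ 2 * ((n₁:ℝ) * n₂) / (k ^ 2 : ℝ) := by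
      have hcast : (T.card : ℝ) = ∑ x ∈ Finset.Icc (1:ℤ) M,
          ((T.filter (fun p => p.1 = x)).card : ℝ) := by
        rw [hTcard, Nat.cast_sum]
      rw [hcast]
      have hle := Finset.sum_le_sum hfibbound
      refine le_trans hle ?_
      have hsum := sum_linear (2 * (N₁:ℝ) * N₂) ((K:ℝ) * N₂) ((K:ℝ) * N₁) M hM0
      simp only [mul_comm] at hsum
      have hsum2 : ∑ x ∈ Finset.Icc (1:ℤ) M, (2 * (N₁:ℝ) * N₂ - K * N₂ * x) / (K * N₁)
          = ((M:ℝ) * (2 * N₁ * N₂) - K * N₂ * ((M:ℝ)*((M:ℝ)+1)/2)) / (K * N₁) :=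
        sum_linear _ _ _ M hM0
      rw [hsum2]
      have hN₂r : (0:ℝ) < (N₂:ℝ) := by exact_mod_cast hN₂pos
      have hN₁r : (0:ℝ) < (N₁:ℝ) := by exact_mod_cast hN₁pos
      have hKr : (2:ℝ) ≤ (K:ℝ) := by exact_mod_cast hK2
      have hMr : (0:ℝ) ≤ (M:ℝ) := by exact_mod_cast hM0
      have hKMr : (K:ℝ) * M ≤ 2 * N₁ := by exact_mod_cast hKM
      have hfin := final_bound (K:ℝ) (N₁:ℝ) (N₂:ℝ) (M:ℝ) hKr hN₁r hN₂r hMr hKMr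
      have he1 : ((n₁:ℝ)) = ((N₁:ℤ) : ℝ) := by rw [hN₁]; push_cast; ring
      have he2 : ((n₂:ℝ)) = ((N₂:ℤ) : ℝ) := by rw [hN₂]; push_cast; ring
      have he3 : ((k:ℝ)) = ((K:ℤ) : ℝ) := by rw [hK]; push_cast; ring
      rw [he1, he2, he3]
      calc ((M:ℝ) * (2 * N₁ * N₂) - K * N₂ * ((M:ℝ)*((M:ℝ)+1)/2)) / (K * N₁)
          ≤ 2*((N₁:ℝ)*N₂)/(K:ℝ)^2 := hfin
        _ = 2 * (((N₁:ℤ):ℝ) * ((N₂:ℤ):ℝ)) / (((K:ℤ):ℝ) ^ 2) := by norm_num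
    have hcast2 : (S.card : ℝ) = (n₁:ℝ) * n₂ - T.card := by
      have hh : (S.card : ℝ) + T.card = (n₁:ℝ) * n₂ := by exact_mod_cast hST
      linarith
    rw [ge_iff_le, hcast2]
    linarith
end

section
/- For all positive integers k ≥ 2, n₁ and n₂, the number of lattice points (x₁,x₂) with x₁ ≥ 1, x₂ ≥ 1 and n₂·x₁ + n₁·x₂ ≤ 2·n₁·n₂/k is at most 2·n₁·n₂/k² (an inequality between real numbers). -/
lemma gauss_sum_real (m : ℕ) : ∑ x ∈ Finset.Icc 1 m, (x : ℝ) = m * (m + 1) / 2 := by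
  induction m with
  | zero => simp
  | succ n ih =>
    rw [Finset.sum_Icc_succ_top (by omega), ih]
    push_cast
    ring

/-- For positive integers n₁, n₂ and an integer k ≥ 2, the number of lattice
points (x₁,x₂) with x₁ ≥ 1, x₂ ≥ 1 and n₂·x₁ + n₁·x₂ ≤ 2·n₁·n₂/k is at most 2·n₁·n₂/k². -/
theorem stmt_3 (k n₁ n₂ : ℕ) (hk : 2 ≤ k) (h₁ : 0 < n₁) (h₂ : 0 < n₂) :
    (({p : ℤ × ℤ | 1 ≤ p.1 ∧ 1 ≤ p.2 ∧
        (n₂ : ℝ) * p.1 + (n₁ : ℝ) * p.2 ≤ 2 * n₁ * n₂ / k}.ncard : ℝ))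
      ≤ 2 * n₁ * n₂ / (k ^ 2 : ℝ) := by
  classical
  set c : ℝ := 2 * n₁ * n₂ / k with hc
  have hb₁ : (0:ℝ) < n₁ := by exact_mod_cast h₁
  have hb₂ : (0:ℝ) < n₂ := by exact_mod_cast h₂
  have hkR : (2:ℝ) ≤ k := by exact_mod_cast hk
  have hk0 : (0:ℝ) < k := by linarith
  have hc0 : 0 < c := by rw [hc]; positivity
  set m : ℕ := (⌊c / n₂⌋).toNat with hm
  have hfl0 : (0:ℤ) ≤ ⌊c / n₂⌋ := Int.floor_nonneg.mpr (by positivity)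
  have hmZ : (m : ℤ) = ⌊c / n₂⌋ := by rw [hm]; exact Int.toNat_of_nonneg hfl0
  have hmle : (m : ℝ) ≤ c / n₂ := by
    have h1 : ((m : ℤ) : ℝ) ≤ c / n₂ := by rw [hmZ]; exact Int.floor_le _
    exact_mod_cast h1
  have hmc : (n₂ : ℝ) * m ≤ c := by
    rw [mul_comm]
    exact (le_div_iff₀ hb₂).mp hmle
  set T : Finset (ℤ × ℤ) :=
    ((Finset.Icc (1:ℤ) (m:ℤ)) ×ˢ (Finset.Icc (1:ℤ) ⌊c / n₁⌋)).filter
      (fun p => (n₂:ℝ) * p.1 + (n₁:ℝ) * p.2 ≤ c) with hT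
  have hset : {p : ℤ × ℤ | 1 ≤ p.1 ∧ 1 ≤ p.2 ∧
      (n₂ : ℝ) * p.1 + (n₁ : ℝ) * p.2 ≤ c} = ↑T := by
    ext p
    simp only [hT, Finset.coe_filter, Finset.mem_product, Finset.mem_Icc, Set.mem_setOf_eq]
    constructor
    · rintro ⟨hp1, hp2, hp3⟩
      refine ⟨⟨⟨hp1, ?_⟩, hp2, ?_⟩, hp3⟩
      · -- p.1 ≤ m
        have hp2R : (1:ℝ) ≤ (p.2 : ℝ) := by exact_mod_cast hp2
        have h2 : (p.1 : ℝ) ≤ c / n₂ := by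
          rw [le_div_iff₀ hb₂]
          nlinarith
        rw [hmZ]
        exact Int.le_floor.mpr h2
      · -- p.2 ≤ ⌊c/n₁⌋
        have hp1R : (1:ℝ) ≤ (p.1 : ℝ) := by exact_mod_cast hp1
        refine Int.le_floor.mpr ?_
        rw [le_div_iff₀ hb₁]
        nlinarith
    · rintro ⟨⟨⟨hp1, _⟩, hp2, _⟩, hp3⟩
      exact ⟨hp1, hp2, hp3⟩
  rw [hset, Set.ncard_coe_finset]
  have hfib : T.card = ∑ x ∈ Finset.Icc 1 m, (T.filter (fun p => p.1.toNat = x)).card := by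
    apply Finset.card_eq_sum_card_fiberwise
    intro p hp
    simp only [hT, Finset.mem_coe, Finset.mem_filter, Finset.mem_product, Finset.mem_Icc] at hp
    obtain ⟨⟨⟨hp1, hp1m⟩, _⟩, _⟩ := hp
    simp only [Finset.mem_coe, Finset.mem_Icc]
    omega
  have hfibbound : ∀ x ∈ Finset.Icc 1 m,
      ((T.filter (fun p => p.1.toNat = x)).card : ℝ) ≤ (c - n₂ * x) / n₁ := by
    intro x hx
    rw [Finset.mem_Icc] at hx
    have hxm : (x : ℝ) ≤ m := by exact_mod_cast hx.2
    have hxc : (n₂ : ℝ) * x ≤ c := by nlinarith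
    have hcard : (T.filter (fun p => p.1.toNat = x)).card ≤
        (Finset.Icc (1:ℤ) ⌊(c - n₂ * x) / n₁⌋).card := by
      apply Finset.card_le_card_of_injOn (fun p => p.2)
      · intro p hp
        simp only [hT, Finset.mem_filter, Finset.mem_product, Finset.mem_Icc,
          Finset.mem_coe] at hp ⊢
        obtain ⟨⟨⟨⟨hp1, _⟩, hp2, _⟩, hple⟩, hpx⟩ := hp
        have hp1x : p.1 = (x : ℤ) := by omega
        refine ⟨hp2, Int.le_floor.mpr ?_⟩
        rw [hp1x] at hple
        rw [le_div_iff₀ hb₁]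
        push_cast at hple ⊢
        nlinarith
      · intro p hp q hq hpq
        simp only [hT, Finset.mem_filter, Finset.mem_product, Finset.mem_Icc,
          Finset.mem_coe] at hp hq
        obtain ⟨⟨⟨⟨hp1, _⟩, _⟩, _⟩, hpx⟩ := hp
        obtain ⟨⟨⟨⟨hq1, _⟩, _⟩, _⟩, hqx⟩ := hq
        have h1 : p.1 = q.1 := by omega
        exact Prod.ext h1 hpq
    have hcard2 : (Finset.Icc (1:ℤ) ⌊(c - n₂ * x) / n₁⌋).card
        = (⌊(c - n₂ * x) / n₁⌋).toNat := by
      rw [Int.card_Icc]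
      congr 1
      ring
    have hr0 : (0:ℝ) ≤ (c - n₂ * x) / n₁ := div_nonneg (by linarith) hb₁.le
    have hfl : (0:ℤ) ≤ ⌊(c - n₂ * x) / n₁⌋ := Int.floor_nonneg.mpr hr0
    have hfinal : ((⌊(c - n₂ * x) / n₁⌋).toNat : ℝ) ≤ (c - n₂ * x) / n₁ := by
      have h1 : (((⌊(c - n₂ * x) / n₁⌋).toNat : ℤ) : ℝ) ≤ (c - n₂ * x) / n₁ := by
        rw [Int.toNat_of_nonneg hfl]
        exact Int.floor_le _
      exact_mod_cast h1
    calc ((T.filter (fun p => p.1.toNat = x)).card : ℝ)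
        ≤ ((⌊(c - n₂ * x) / n₁⌋).toNat : ℝ) := by exact_mod_cast hcard2 ▸ hcard
      _ ≤ (c - n₂ * x) / n₁ := hfinal
  have hsum : ((T.card : ℕ) : ℝ) ≤ ∑ x ∈ Finset.Icc 1 m, (c - n₂ * x) / n₁ := by
    rw [hfib]
    push_cast
    exact Finset.sum_le_sum hfibbound
  have hsumval : ∑ x ∈ Finset.Icc 1 m, (c - n₂ * x) / n₁
      = ((m : ℝ) * c - n₂ * (m * (m + 1) / 2)) / n₁ := by
    rw [← Finset.sum_div]
    congr 1
    rw [Finset.sum_sub_distrib, Finset.sum_const, ← Finset.mul_sum, gauss_sum_real,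
      Nat.card_Icc]
    push_cast
    ring
  have hmain : ((m : ℝ) * c - n₂ * (m * (m + 1) / 2)) / n₁ ≤ c ^ 2 / (2 * n₁ * n₂) := by
    rw [div_le_div_iff₀ hb₁ (by positivity)]
    nlinarith [sq_nonneg (c - n₂ * m), mul_pos hb₁ hb₂, sq_nonneg ((m:ℝ)),
      mul_nonneg (mul_nonneg hb₂.le hb₂.le) (Nat.cast_nonneg m : (0:ℝ) ≤ m)]
  have hceq : c ^ 2 / (2 * n₁ * n₂) = 2 * n₁ * n₂ / (k ^ 2 : ℝ) := by
    rw [hc]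
    field_simp
  calc ((T.card : ℕ) : ℝ) ≤ ∑ x ∈ Finset.Icc 1 m, (c - n₂ * x) / n₁ := hsum
    _ = ((m : ℝ) * c - n₂ * (m * (m + 1) / 2)) / n₁ := hsumval
    _ ≤ c ^ 2 / (2 * n₁ * n₂) := hmain
    _ = 2 * n₁ * n₂ / (k ^ 2 : ℝ) := hceq
end

section
/- There exists a constant C > 0 such that for all positive integers n₁ and n₂, every 3-sum (n₁,n₂)-free subset S of [n₁]×[n₂] satisfies |S| ≤ (7/9)·n₁·n₂ + C·max(n₁,n₂). -/
namespace Stmt4Aux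

variable (n₁ n₂ : ℕ) (S : Finset (ℤ × ℤ))

/-- Column fiber of `S` over first coordinate `u`. -/
noncomputable def Acol (u : ℤ) : Finset ℤ := (Finset.Icc (1:ℤ) (n₂:ℤ)).filter (fun y => (u, y) ∈ S)

/-- Column fiber of the complement. -/
noncomputable def Tcol (u : ℤ) : Finset ℤ := (Finset.Icc (1:ℤ) (n₂:ℤ)).filter (fun y => (u, y) ∉ S)

lemma card_Icc_int (a b : ℤ) : (Finset.Icc a b).card = (b + 1 - a).toNat := Int.card_Icc a b

lemma Acol_card_le (u : ℤ) : (Acol n₂ S u).card ≤ n₂ := by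
  have h := Finset.card_filter_le (Finset.Icc (1:ℤ) (n₂:ℤ)) (fun y => (u, y) ∈ S)
  have h2 : (Finset.Icc (1:ℤ) (n₂:ℤ)).card = n₂ := by rw [Int.card_Icc]; omega
  unfold Acol; omega

lemma Tcol_card_le (u : ℤ) : (Tcol n₂ S u).card ≤ n₂ := by
  have h := Finset.card_filter_le (Finset.Icc (1:ℤ) (n₂:ℤ)) (fun y => (u, y) ∉ S)
  have h2 : (Finset.Icc (1:ℤ) (n₂:ℤ)).card = n₂ := by rw [Int.card_Icc]; omega
  unfold Tcol; omega

lemma col_card (u : ℤ) : (Acol n₂ S u).card + (Tcol n₂ S u).card = n₂ := by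
  classical
  have h := Finset.card_filter_add_card_filter_not
    (s := Finset.Icc (1:ℤ) (n₂:ℤ)) (p := fun y => (u, y) ∈ S)
  have h2 : (Finset.Icc (1:ℤ) (n₂:ℤ)).card = n₂ := by rw [Int.card_Icc]; omega
  unfold Acol Tcol
  convert (h2 ▸ h) using 3

/-- Sum of complement-column sizes over distinct columns is at most the size of the
complement. -/
lemma Tcol_sum_le (I : Finset ℤ)
    (hI : I ⊆ Finset.Icc (1:ℤ) (n₁:ℤ)) :
    ∑ u ∈ I, (Tcol n₂ S u).card
      ≤ ((Finset.Icc ((1:ℤ),(1:ℤ)) ((n₁:ℤ),(n₂:ℤ))) \ S).card := by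
  classical
  have hdisj : ∀ x ∈ I, ∀ y ∈ I, x ≠ y →
      Disjoint ((Tcol n₂ S x).image (fun v => (x, v)))
               ((Tcol n₂ S y).image (fun v => (y, v))) := by
    intro x _ y _ hxy
    rw [Finset.disjoint_left]
    rintro p hp hq
    simp only [Finset.mem_image] at hp hq
    obtain ⟨v, _, rfl⟩ := hp
    obtain ⟨w, _, hw⟩ := hq
    exact hxy (congrArg Prod.fst hw).symm
  have hcards : ∀ u, ((Tcol n₂ S u).image (fun v => (u, v))).card = (Tcol n₂ S u).card := by
    intro u
    apply Finset.card_image_of_injective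
    intro a b hab
    simpa using congrArg Prod.snd hab
  calc ∑ u ∈ I, (Tcol n₂ S u).card
      = ∑ u ∈ I, ((Tcol n₂ S u).image (fun v => (u, v))).card := by
        exact (Finset.sum_congr rfl (fun u _ => (hcards u).symm))
    _ = (I.biUnion (fun u => (Tcol n₂ S u).image (fun v => (u, v)))).card :=
        (Finset.card_biUnion hdisj).symm
    _ ≤ _ := by
        apply Finset.card_le_card
        intro p hp
        simp only [Finset.mem_biUnion, Finset.mem_image] at hp
        obtain ⟨u, hu, v, hv, rfl⟩ := hp
        have hu' := hI hu
        rw [Finset.mem_Icc] at hu'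
        unfold Tcol at hv
        rw [Finset.mem_filter, Finset.mem_Icc] at hv
        rw [Finset.mem_sdiff, Finset.mem_Icc]
        exact ⟨⟨⟨hu'.1, hv.1.1⟩, ⟨hu'.2, hv.1.2⟩⟩, hv.2⟩

/-- The bottom element of a nonempty column. -/
noncomputable def mmin (c : ℤ) : ℤ :=
  if h : (Acol n₂ S c).Nonempty then (Acol n₂ S c).min' h else 1

/-- The forced-complement set associated to the column pair `(a, c)`. -/
noncomputable def Wset (a c : ℤ) : Finset (ℤ × ℤ) :=
  if (Acol n₂ S c).Nonempty then
    ((Acol n₂ S a).filter (fun y => y + mmin n₂ S c ≤ (n₂:ℤ) - 1)).image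
      (fun y => ((n₁:ℤ) - a - c, (n₂:ℤ) - y - mmin n₂ S c))
  else ∅

lemma Wset_fst {a c : ℤ} {p : ℤ × ℤ} (hp : p ∈ Wset n₁ n₂ S a c) :
    p.1 = (n₁:ℤ) - a - c := by
  unfold Wset at hp
  split at hp
  · simp only [Finset.mem_image] at hp
    obtain ⟨y, _, rfl⟩ := hp
    rfl
  · simp at hp

lemma Wset_sub (hfree : ¬ ∃ a : Fin 3 → ℤ × ℤ, (∀ i, a i ∈ S) ∧
      ∑ i, a i = ((n₁ : ℤ), (n₂ : ℤ)))
    {a c : ℤ} (ha : 1 ≤ a) (hc : 1 ≤ c) (hac : a + c ≤ (n₁:ℤ) - 1) :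
    Wset n₁ n₂ S a c ⊆ (Finset.Icc ((1:ℤ),(1:ℤ)) ((n₁:ℤ),(n₂:ℤ))) \ S := by
  unfold Wset
  split
  case isTrue hne =>
    intro p hp
    simp only [Finset.mem_image, Finset.mem_filter] at hp
    obtain ⟨y, ⟨hyA, hyle⟩, rfl⟩ := hp
    have hm : mmin n₂ S c = (Acol n₂ S c).min' hne := by unfold mmin; rw [dif_pos hne]
    have hmmem : mmin n₂ S c ∈ Acol n₂ S c := by rw [hm]; exact (Acol n₂ S c).min'_mem hne
    unfold Acol at hyA hmmem
    rw [Finset.mem_filter, Finset.mem_Icc] at hyA hmmem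
    obtain ⟨⟨hy1, hy2⟩, hyS⟩ := hyA
    obtain ⟨⟨hm1, hm2⟩, hmS⟩ := hmmem
    rw [Finset.mem_sdiff, Finset.mem_Icc]
    constructor
    · constructor
      · constructor <;> simp <;> omega
      · constructor <;> simp <;> omega
    · intro hpS
      apply hfree
      refine ⟨![(a, y), (c, mmin n₂ S c), ((n₁:ℤ) - a - c, (n₂:ℤ) - y - mmin n₂ S c)], ?_, ?_⟩
      · intro i
        fin_cases i
        · exact hyS
        · exact hmS
        · exact hpS
      · rw [Fin.sum_univ_three]
        simp only [Matrix.cons_val_zero, Matrix.cons_val_one, Matrix.head_cons,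
          Matrix.cons_val_two, Matrix.tail_cons, Prod.mk_add_mk, Prod.mk.injEq]
        constructor <;> ring
  case isFalse =>
    intro p hp
    simp at hp

lemma Wset_card (a c : ℤ) :
    ((Acol n₂ S a).card : ℤ) + ((Acol n₂ S c).card : ℤ) - (n₂:ℤ) - 2
      ≤ ((Wset n₁ n₂ S a c).card : ℤ) := by
  classical
  unfold Wset
  split
  case isTrue hne =>
    set m := mmin n₂ S c with hmdef
    have hm : m = (Acol n₂ S c).min' hne := by rw [hmdef]; unfold mmin; rw [dif_pos hne]
    have hmmem : m ∈ Acol n₂ S c := by rw [hm]; exact (Acol n₂ S c).min'_mem hne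
    have hmIcc : 1 ≤ m ∧ m ≤ (n₂:ℤ) := by
      unfold Acol at hmmem
      rw [Finset.mem_filter, Finset.mem_Icc] at hmmem
      exact hmmem.1
    -- m - 1 ≤ Tcol c
    have hsubT : Finset.Icc (1:ℤ) (m - 1) ⊆ Tcol n₂ S c := by
      intro y hy
      rw [Finset.mem_Icc] at hy
      unfold Tcol
      rw [Finset.mem_filter, Finset.mem_Icc]
      refine ⟨⟨hy.1, by omega⟩, ?_⟩
      intro hyS
      have hyA : y ∈ Acol n₂ S c := by
        unfold Acol; rw [Finset.mem_filter, Finset.mem_Icc]; exact ⟨⟨hy.1, by omega⟩, hyS⟩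
      have := (Acol n₂ S c).min'_le y hyA
      rw [← hm] at this
      omega
    have hmT : m - 1 ≤ ((Tcol n₂ S c).card : ℤ) := by
      have h1 := Finset.card_le_card hsubT
      have h2 : (Finset.Icc (1:ℤ) (m-1)).card = (m - 1).toNat := by rw [Int.card_Icc]; omega
      omega
    have hTc : ((Tcol n₂ S c).card : ℤ) = (n₂:ℤ) - ((Acol n₂ S c).card : ℤ) := by
      have := col_card n₂ S c
      omega
    -- the filtered set misses at most m + 1 elements
    have hmiss : ((Acol n₂ S a).filter (fun y => ¬ (y + m ≤ (n₂:ℤ) - 1)))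
        ⊆ Finset.Icc ((n₂:ℤ) - m) (n₂:ℤ) := by
      intro y hy
      rw [Finset.mem_filter] at hy
      obtain ⟨hyA, hyg⟩ := hy
      unfold Acol at hyA
      rw [Finset.mem_filter, Finset.mem_Icc] at hyA
      rw [Finset.mem_Icc]
      omega
    have hmisscard : (((Acol n₂ S a).filter (fun y => ¬ (y + m ≤ (n₂:ℤ) - 1))).card : ℤ)
        ≤ m + 1 := by
      have h1 := Finset.card_le_card hmiss
      have h2 : (Finset.Icc ((n₂:ℤ) - m) (n₂:ℤ)).card = (m + 1).toNat := by
        rw [Int.card_Icc]; omega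
      omega
    have hsplit := Finset.card_filter_add_card_filter_not
      (s := Acol n₂ S a) (p := fun y => y + m ≤ (n₂:ℤ) - 1)
    have himg : (((Acol n₂ S a).filter (fun y => y + m ≤ (n₂:ℤ) - 1)).image
        (fun y => ((n₁:ℤ) - a - c, (n₂:ℤ) - y - m))).card
        = ((Acol n₂ S a).filter (fun y => y + m ≤ (n₂:ℤ) - 1)).card := by
      apply Finset.card_image_of_injective
      intro y₁ y₂ h
      have := congrArg Prod.snd h
      simp only at this
      omega
    rw [himg]
    omega
  case isFalse hne =>
    have h0 : (Acol n₂ S c).card = 0 := by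
      rw [Finset.card_eq_zero]
      exact Finset.not_nonempty_iff_eq_empty.mp hne
    have := Acol_card_le n₂ S a
    simp only [Finset.card_empty]
    omega

end Stmt4Aux

/-- There exists C > 0 such that for all positive integers n₁, n₂, every
3-sum (n₁,n₂)-free subset S of [n₁]×[n₂] satisfies |S| ≤ (7/9)·n₁·n₂ + C·max(n₁,n₂). -/
theorem stmt_4 :
    ∃ C : ℝ, 0 < C ∧ ∀ n₁ n₂ : ℕ, 0 < n₁ → 0 < n₂ →
      ∀ S : Finset (ℤ × ℤ), S ⊆ Finset.Icc (1, 1) ((n₁ : ℤ), (n₂ : ℤ)) →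
        (¬ ∃ a : Fin 3 → ℤ × ℤ, (∀ i, a i ∈ S) ∧ ∑ i, a i = ((n₁ : ℤ), (n₂ : ℤ))) →
        (S.card : ℝ) ≤ (7 / 9 : ℝ) * (n₁ * n₂) + C * (max n₁ n₂ : ℕ) := by
  classical
  refine ⟨5, by norm_num, ?_⟩
  intro n₁ n₂ h₁ h₂ S hS hfree
  open Stmt4Aux in
  -- the box has n₁ * n₂ elements
  have hBcard : (Finset.Icc ((1:ℤ),(1:ℤ)) ((n₁:ℤ),(n₂:ℤ))).card = n₁ * n₂ := by
    rw [Finset.card_Icc_prod]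
    simp only [Int.card_Icc]
    have e1 : ((n₁:ℤ) + 1 - 1).toNat = n₁ := by omega
    have e2 : ((n₂:ℤ) + 1 - 1).toNat = n₂ := by omega
    rw [e1, e2]
  set B : Finset (ℤ × ℤ) := Finset.Icc ((1:ℤ),(1:ℤ)) ((n₁:ℤ),(n₂:ℤ)) with hBdef
  set t : ℤ := ((B \ S).card : ℤ) with htdef
  have hts : (S.card : ℤ) + t = (n₁:ℤ) * (n₂:ℤ) := by
    have h1 : (B \ S).card = B.card - S.card := Finset.card_sdiff_of_subset hS
    have h2 : S.card ≤ B.card := Finset.card_le_card hS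
    rw [htdef, h1, hBcard]
    omega
  have hkey : 9 * (S.card : ℤ) ≤ 7 * ((n₁:ℤ) * (n₂:ℤ)) + 15 * ((max n₁ n₂ : ℕ) : ℤ) := by
    have hmax1 : (n₁:ℤ) ≤ ((max n₁ n₂ : ℕ) : ℤ) := by exact_mod_cast Nat.le_max_left n₁ n₂
    have hmax2 : (n₂:ℤ) ≤ ((max n₁ n₂ : ℕ) : ℤ) := by exact_mod_cast Nat.le_max_right n₁ n₂
    by_cases hn : n₁ < 5
    · -- small case
      have hcard : (S.card : ℤ) ≤ (n₁:ℤ) * (n₂:ℤ) := by omega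
      have h4 : (n₁:ℤ) ≤ 4 := by exact_mod_cast Nat.lt_succ_iff.mp hn
      have h2' : (1:ℤ) ≤ (n₂:ℤ) := by exact_mod_cast h₂
      nlinarith [mul_nonneg (by linarith : (0:ℤ) ≤ (4:ℤ) - (n₁:ℤ)) (by linarith : (0:ℤ) ≤ (n₂:ℤ))]
    · -- main case
      push_neg at hn
      set k : ℕ := (n₁ - 2) / 3 with hkdef
      have hk3 : 3 * k ≤ n₁ - 2 ∧ n₁ - 2 < 3 * k + 3 ∧ 1 ≤ k := by
        constructor
        · omega
        constructor
        · omega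
        · omega
      set K : ℤ := (k : ℤ) with hKdef
      have hK1 : 1 ≤ K := by rw [hKdef]; exact_mod_cast hk3.2.2
      have hKle : 3 * K ≤ (n₁:ℤ) - 2 := by
        have := hk3.1
        omega
      have hKge : (n₁:ℤ) - 4 ≤ 3 * K := by
        have := hk3.2.1
        omega
      -- the pairing
      set cc : ℤ → ℤ := fun a => if a ≤ K then a + K else a + (1 - K) with hccdef
      set I : Finset ℤ := Finset.Icc (1:ℤ) (2*K) with hIdef
      have hImem : ∀ a ∈ I, 1 ≤ a ∧ a ≤ 2*K := by
        intro a ha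
        rw [hIdef, Finset.mem_Icc] at ha
        exact ha
      have hpair : ∀ a ∈ I, 1 ≤ a ∧ 1 ≤ cc a ∧ a + cc a ≤ (n₁:ℤ) - 1 := by
        intro a ha
        have h := hImem a ha
        rw [hccdef]
        simp only
        split <;> omega
      have hsig : ∀ a ∈ I, ∀ b ∈ I, a ≠ b → a + cc a ≠ b + cc b := by
        intro a ha b hb hab
        have h1 := hImem a ha
        have h2 := hImem b hb
        rw [hccdef]
        simp only
        split <;> split <;> omega
      -- sum of Wset cards bounded by t
      have hWsum : (∑ a ∈ I, (Stmt4Aux.Wset n₁ n₂ S a (cc a)).card : ℤ) ≤ t := by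
        have hdisj : ∀ a ∈ I, ∀ b ∈ I, a ≠ b →
            Disjoint (Stmt4Aux.Wset n₁ n₂ S a (cc a)) (Stmt4Aux.Wset n₁ n₂ S b (cc b)) := by
          intro a ha b hb hab
          rw [Finset.disjoint_left]
          intro p hpa hpb
          have e1 := Stmt4Aux.Wset_fst n₁ n₂ S hpa
          have e2 := Stmt4Aux.Wset_fst n₁ n₂ S hpb
          exact hsig a ha b hb hab (by omega)
        have hsub : I.biUnion (fun a => Stmt4Aux.Wset n₁ n₂ S a (cc a)) ⊆ B \ S := by
          intro p hp
          rw [Finset.mem_biUnion] at hp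
          obtain ⟨a, ha, hpa⟩ := hp
          have h := hpair a ha
          exact Stmt4Aux.Wset_sub n₁ n₂ S hfree h.1 h.2.1 h.2.2 hpa
        have := Finset.card_le_card hsub
        rw [Finset.card_biUnion hdisj] at this
        rw [htdef]
        exact_mod_cast this
      -- main inequality per pair, summed
      have hmain : (∑ a ∈ I, (((Stmt4Aux.Acol n₂ S a).card : ℤ)
            + ((Stmt4Aux.Acol n₂ S (cc a)).card : ℤ) - (n₂:ℤ) - 2)) ≤ t := by
        calc (∑ a ∈ I, (((Stmt4Aux.Acol n₂ S a).card : ℤ)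
            + ((Stmt4Aux.Acol n₂ S (cc a)).card : ℤ) - (n₂:ℤ) - 2))
            ≤ ∑ a ∈ I, ((Stmt4Aux.Wset n₁ n₂ S a (cc a)).card : ℤ) := by
              apply Finset.sum_le_sum
              intro a _
              exact Stmt4Aux.Wset_card n₁ n₂ S a (cc a)
          _ ≤ t := hWsum
      -- cardinalities of index intervals
      have hIcard : (I.card : ℤ) = 2 * K := by
        rw [hIdef, Int.card_Icc]
        omega
      -- bound for ∑ Acol a
      have hTsum1 : (∑ a ∈ I, ((Stmt4Aux.Tcol n₂ S a).card : ℤ)) ≤ t := by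
        have hsub : I ⊆ Finset.Icc (1:ℤ) (n₁:ℤ) := by
          intro a ha
          have := hImem a ha
          rw [Finset.mem_Icc]
          omega
        have := Stmt4Aux.Tcol_sum_le n₁ n₂ S I hsub
        rw [htdef]
        exact_mod_cast this
      have hA1 : 2*K*(n₂:ℤ) - t ≤ ∑ a ∈ I, ((Stmt4Aux.Acol n₂ S a).card : ℤ) := by
        have e : ∑ a ∈ I, ((Stmt4Aux.Acol n₂ S a).card : ℤ)
            = ∑ a ∈ I, ((n₂:ℤ) - ((Stmt4Aux.Tcol n₂ S a).card : ℤ)) := by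
          apply Finset.sum_congr rfl
          intro a _
          have := Stmt4Aux.col_card n₂ S a
          omega
        rw [e, Finset.sum_sub_distrib, Finset.sum_const, nsmul_eq_mul]
        have h' : (I.card : ℤ) * (n₂:ℤ) = 2*K*(n₂:ℤ) := by rw [hIcard]
        linarith [hTsum1]
      -- bound for ∑ Acol (cc a)
      have hA2 : 2*K*(n₂:ℤ) - t - (n₂:ℤ) ≤ ∑ a ∈ I, ((Stmt4Aux.Acol n₂ S (cc a)).card : ℤ) := by
        set f : ℤ → ℤ := fun u => ((Stmt4Aux.Acol n₂ S u).card : ℤ) with hfdef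
        set g : ℤ → ℤ := fun u => ((Stmt4Aux.Tcol n₂ S u).card : ℤ) with hgdef
        have hfg : ∀ u : ℤ, f u = (n₂:ℤ) - g u := by
          intro u
          have := Stmt4Aux.col_card n₂ S u
          rw [hfdef, hgdef]
          simp only
          omega
        -- split the index interval
        have hsplitI : I = Finset.Icc (1:ℤ) K ∪ Finset.Icc (K+1) (2*K) := by
          ext x
          simp only [hIdef, Finset.mem_Icc, Finset.mem_union]
          omega
        have hdisjI : Disjoint (Finset.Icc (1:ℤ) K) (Finset.Icc (K+1) (2*K)) := by
          rw [Finset.disjoint_left]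
          intro x h1 h2
          rw [Finset.mem_Icc] at h1 h2
          omega
        have hs1 : ∑ a ∈ Finset.Icc (1:ℤ) K, f (cc a) = ∑ a ∈ Finset.Icc (1:ℤ) K, f (a + K) := by
          apply Finset.sum_congr rfl
          intro a ha
          rw [Finset.mem_Icc] at ha
          rw [hccdef]
          simp only
          rw [if_pos ha.2]
        have hm1 : ∑ u ∈ Finset.Icc (K+1) (2*K), f u = ∑ a ∈ Finset.Icc (1:ℤ) K, f (a + K) := by
          have h := Finset.sum_map (Finset.Icc (1:ℤ) K) (addRightEmbedding K) f
          rw [Finset.map_add_right_Icc] at h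
          rw [show (1:ℤ) + K = K + 1 by ring, show K + K = 2*K by ring] at h
          rw [h]
          apply Finset.sum_congr rfl
          intro a _
          simp [addRightEmbedding]
        have hs2 : ∑ a ∈ Finset.Icc (K+1) (2*K), f (cc a)
            = ∑ a ∈ Finset.Icc (K+1) (2*K), f (a + (1 - K)) := by
          apply Finset.sum_congr rfl
          intro a ha
          rw [Finset.mem_Icc] at ha
          rw [hccdef]
          simp only
          rw [if_neg (by omega)]
        have hm2 : ∑ u ∈ Finset.Icc (2:ℤ) (K+1), f u
            = ∑ a ∈ Finset.Icc (K+1) (2*K), f (a + (1 - K)) := by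
          have h := Finset.sum_map (Finset.Icc (K+1) (2*K)) (addRightEmbedding (1 - K)) f
          rw [Finset.map_add_right_Icc] at h
          rw [show K + 1 + (1 - K) = 2 by ring, show 2*K + (1 - K) = K + 1 by ring] at h
          rw [h]
          apply Finset.sum_congr rfl
          intro a _
          simp [addRightEmbedding]
        have htotal : ∑ a ∈ I, f (cc a)
            = ∑ u ∈ Finset.Icc (K+1) (2*K), f u + ∑ u ∈ Finset.Icc (2:ℤ) (K+1), f u := by
          rw [hsplitI, Finset.sum_union hdisjI, hs1, hs2, hm1, hm2]
        -- convert to Tcol sums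
        have hcard1 : ((Finset.Icc (K+1) (2*K)).card : ℤ) = K := by
          rw [Int.card_Icc]; omega
        have hcard2 : ((Finset.Icc (2:ℤ) (K+1)).card : ℤ) = K := by
          rw [Int.card_Icc]; omega
        have hc1 : ∑ u ∈ Finset.Icc (K+1) (2*K), f u
            = K*(n₂:ℤ) - ∑ u ∈ Finset.Icc (K+1) (2*K), g u := by
          rw [Finset.sum_congr rfl (fun u _ => hfg u), Finset.sum_sub_distrib,
            Finset.sum_const, nsmul_eq_mul, hcard1]
        have hc2 : ∑ u ∈ Finset.Icc (2:ℤ) (K+1), f u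
            = K*(n₂:ℤ) - ∑ u ∈ Finset.Icc (2:ℤ) (K+1), g u := by
          rw [Finset.sum_congr rfl (fun u _ => hfg u), Finset.sum_sub_distrib,
            Finset.sum_const, nsmul_eq_mul, hcard2]
        -- bound the two Tcol sums
        have hins : Finset.Icc (2:ℤ) (K+1) = insert (K+1) (Finset.Icc (2:ℤ) K) := by
          ext x
          simp only [Finset.mem_Icc, Finset.mem_insert]
          omega
        have hnotmem : (K+1) ∉ Finset.Icc (2:ℤ) K := by
          rw [Finset.mem_Icc]; omega
        have hu : Finset.Icc (2:ℤ) K ∪ Finset.Icc (K+1) (2*K) = Finset.Icc (2:ℤ) (2*K) := by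
          ext x
          simp only [Finset.mem_Icc, Finset.mem_union]
          omega
        have hdisj2 : Disjoint (Finset.Icc (2:ℤ) K) (Finset.Icc (K+1) (2*K)) := by
          rw [Finset.disjoint_left]
          intro x h1 h2
          rw [Finset.mem_Icc] at h1 h2
          omega
        have hTbig : ∑ u ∈ Finset.Icc (2:ℤ) (2*K), ((Stmt4Aux.Tcol n₂ S u).card : ℤ) ≤ t := by
          have hsub : Finset.Icc (2:ℤ) (2*K) ⊆ Finset.Icc (1:ℤ) (n₁:ℤ) := by
            intro x hx
            rw [Finset.mem_Icc] at hx ⊢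
            omega
          have := Stmt4Aux.Tcol_sum_le n₁ n₂ S _ hsub
          rw [htdef]
          exact_mod_cast this
        have hTK1 : g (K+1) ≤ (n₂:ℤ) := by
          rw [hgdef]
          simp only
          exact_mod_cast Stmt4Aux.Tcol_card_le n₂ S (K+1)
        have hgsum : ∑ u ∈ Finset.Icc (K+1) (2*K), g u + ∑ u ∈ Finset.Icc (2:ℤ) (K+1), g u
            ≤ t + (n₂:ℤ) := by
          have e1 : ∑ u ∈ Finset.Icc (2:ℤ) (K+1), g u
              = g (K+1) + ∑ u ∈ Finset.Icc (2:ℤ) K, g u := by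
            rw [hins, Finset.sum_insert hnotmem]
          have e2 : ∑ u ∈ Finset.Icc (2:ℤ) K, g u + ∑ u ∈ Finset.Icc (K+1) (2*K), g u
              = ∑ u ∈ Finset.Icc (2:ℤ) (2*K), g u := by
            rw [← Finset.sum_union hdisj2, hu]
          have e3 : ∑ u ∈ Finset.Icc (2:ℤ) (2*K), g u ≤ t := by
            rw [hgdef]
            simp only
            exact hTbig
          omega
        rw [htotal, hc1, hc2]
        linarith [hgsum]
      -- expand the main sum
      have hexpand : ∑ a ∈ I, (((Stmt4Aux.Acol n₂ S a).card : ℤ)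
            + ((Stmt4Aux.Acol n₂ S (cc a)).card : ℤ) - (n₂:ℤ) - 2)
          = (∑ a ∈ I, ((Stmt4Aux.Acol n₂ S a).card : ℤ))
            + (∑ a ∈ I, ((Stmt4Aux.Acol n₂ S (cc a)).card : ℤ)) - (I.card : ℤ) * ((n₂:ℤ) + 2) := by
        rw [show (fun a => ((Stmt4Aux.Acol n₂ S a).card : ℤ)
            + ((Stmt4Aux.Acol n₂ S (cc a)).card : ℤ) - (n₂:ℤ) - 2)
          = (fun a => (((Stmt4Aux.Acol n₂ S a).card : ℤ)
            + ((Stmt4Aux.Acol n₂ S (cc a)).card : ℤ)) - ((n₂:ℤ) + 2)) from by funext a; ring]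
        rw [Finset.sum_sub_distrib, Finset.sum_add_distrib, Finset.sum_const, nsmul_eq_mul]
      have h3t : 3 * t ≥ 2*K*(n₂:ℤ) - (n₂:ℤ) - 4*K := by
        have := hmain
        rw [hexpand] at this
        have hIc : (I.card : ℤ) * ((n₂:ℤ) + 2) = 2*K*(n₂:ℤ) + 4*K := by
          rw [hIcard]; ring
        linarith [hA1, hA2]
      -- final arithmetic
      have hn2pos : (1:ℤ) ≤ (n₂:ℤ) := by exact_mod_cast h₂
      have hp1 : ((n₁:ℤ) - 4) * (n₂:ℤ) ≤ 3*K*(n₂:ℤ) := by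
        apply mul_le_mul_of_nonneg_right hKge
        linarith
      linarith [hp1, h3t, hts, hKle, hmax1, hmax2]
  have hfinal : (9:ℝ) * (S.card : ℝ) ≤ 7 * ((n₁:ℝ) * (n₂:ℝ)) + 15 * ((max n₁ n₂ : ℕ) : ℝ) := by
    exact_mod_cast hkey
  have hmaxnn : (0:ℝ) ≤ ((max n₁ n₂ : ℕ) : ℝ) := Nat.cast_nonneg _
  nlinarith [hfinal, hmaxnn]
end

section
/- For all integers k ≥ 2 and n ≥ 1, every k-sum n-free subset S of [n] satisfies |S| ≤ (1 − 1/k)·n + 1 (an inequality between real numbers). -/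
/-!
Let `m` be the least element of `S`. Padding with `k - 2` copies of `m`, no two elements of `S`
sum to `t = n - (k - 2) m`. Inside `[m, t - m]` the reflection `a ↦ t - a` sends `S` into its
complement, so `S` takes at most half of that interval, and above `t - m` it takes at most
`(k - 1) m` further elements; hence `2 |S| ≤ n + (k - 2) m + 1`. This gives the bound when
`k m ≤ n`, and otherwise `|S| ≤ n - m + 1` already does.
-/

open Finset

theorem Finset.two_mul_card_inter_le_of_add_ne {G : Type*} [AddCommGroup G] [DecidableEq G]
    {S I : Finset G} {t : G} (hI : ∀ a ∈ I, t - a ∈ I) (hS : ∀ a ∈ S, ∀ b ∈ S, a + b ≠ t) :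
    2 * #(S ∩ I) ≤ #I := by
  have hreflect : #(S ∩ I) ≤ #(I \ S) := by
    refine card_le_card_of_injOn (t - ·) (fun a ha => ?_) (fun a _ b _ h => sub_right_injective h)
    obtain ⟨haS, haI⟩ := mem_inter.mp ha
    exact mem_sdiff.mpr ⟨hI a haI, fun h => hS a haS _ h (add_sub_cancel a t)⟩
  have hsplit := card_sdiff_add_card_inter I S
  rw [inter_comm] at hsplit
  omega

theorem Finset.two_mul_card_le_of_add_ne {S : Finset ℤ} {m n t : ℤ} (hS : S ⊆ Icc m n)
    (hmt : 2 * m ≤ t + 1) (htn : t ≤ n + m) (hsum : ∀ a ∈ S, ∀ b ∈ S, a + b ≠ t) :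
    2 * (#S : ℤ) ≤ 2 * n - t + 1 := by
  set I := Icc m (t - m)
  have hlow : 2 * #(S ∩ I) ≤ #I :=
    two_mul_card_inter_le_of_add_ne (fun a ha => by simp only [I, mem_Icc] at ha ⊢; omega) hsum
  have hhigh : S \ I ⊆ Icc (t - m + 1) n := fun a ha => by
    simp only [I, mem_sdiff, mem_Icc] at ha ⊢
    have := hS ha.1
    rw [mem_Icc] at this
    omega
  have hI : #I = (t - m + 1 - m).toNat := Int.card_Icc m (t - m)
  have hhigh_card : (#(S \ I) : ℤ) ≤ n - t + m := by
    have := card_le_card hhigh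
    rw [Int.card_Icc] at this
    omega
  have hsplit := card_inter_add_card_sdiff S I
  omega

theorem add_add_nsmul_ne_of_not_exists_sum {M : Type*} [AddCommMonoid M] {S : Set M} {k : ℕ}
    {b : M} (hfree : ¬ ∃ x : Fin (k + 2) → M, (∀ i, x i ∈ S) ∧ ∑ i, x i = b)
    {x y c : M} (hx : x ∈ S) (hy : y ∈ S) (hc : c ∈ S) : x + y + k • c ≠ b := by
  intro hsum
  refine hfree ⟨Fin.cons x (Fin.cons y fun _ => c), fun i => ?_, ?_⟩
  · exact Fin.cases hx (Fin.cases hy fun _ => hc) i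
  · simp [Fin.sum_cons, ← hsum, add_assoc]

theorem stmt_7_general (k n : ℕ) (hk : 2 ≤ k)
    (S : Finset ℤ) (hS : S ⊆ Finset.Icc (1 : ℤ) (n : ℤ))
    (hfree : ¬ ∃ x : Fin k → ℤ, (∀ i, x i ∈ S) ∧ ∑ i, x i = (n : ℤ)) :
    (S.card : ℝ) ≤ (1 - 1 / (k : ℝ)) * n + 1 := by
  obtain ⟨K, rfl⟩ : ∃ K, k = K + 2 := ⟨k - 2, by omega⟩
  suffices h : ((K + 2 : ℕ) : ℤ) * #S ≤ (K + 1) * n + (K + 2) by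
    rw [show (1 - 1 / ((K + 2 : ℕ) : ℝ)) * n + 1 = ((K + 1) * n + (K + 2)) / (K + 2 : ℕ) by
      push_cast; field_simp; ring, le_div_iff₀ (by positivity), mul_comm]
    exact_mod_cast h
  rcases S.eq_empty_or_nonempty with rfl | hne
  · simp only [card_empty, Nat.cast_zero, mul_zero]
    positivity
  set m := S.min' hne
  have hm : 1 ≤ m ∧ m ≤ n := mem_Icc.mp (hS (S.min'_mem hne))
  have hSm : S ⊆ Icc m n := fun a ha => mem_Icc.mpr ⟨S.min'_le a ha, (mem_Icc.mp (hS ha)).2⟩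
  push_cast
  by_cases hbig : (n : ℤ) < (K + 2) * m
  · have hcard : (#S : ℤ) ≤ n + 1 - m := by
      have := card_le_card hSm
      rw [Int.card_Icc] at this
      omega
    nlinarith
  · have hsum : ∀ a ∈ S, ∀ b ∈ S, a + b ≠ n - K * m := fun a ha b hb h =>
      add_add_nsmul_ne_of_not_exists_sum (S := (S : Set ℤ)) hfree ha hb (S.min'_mem hne)
        (by rw [nsmul_eq_mul, h]; ring)
    have hcard := two_mul_card_le_of_add_ne hSm (by nlinarith) (by nlinarith) hsum
    nlinarith

/-- For k ≥ 2 and n ≥ 1, every k-sum n-free subset S of [n] satisfies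
|S| ≤ (1 − 1/k)·n + 1. -/
theorem stmt_7 (k n : ℕ) (hk : 2 ≤ k) (hn : 1 ≤ n)
    (S : Finset ℤ) (hS : S ⊆ Finset.Icc (1 : ℤ) (n : ℤ))
    (hfree : ¬ ∃ x : Fin k → ℤ, (∀ i, x i ∈ S) ∧ ∑ i, x i = (n : ℤ)) :
    (S.card : ℝ) ≤ (1 - 1 / (k : ℝ)) * n + 1 :=
  stmt_7_general k n hk S hS hfree
end

section
/- For all positive integers n₁ and n₂, the maximum cardinality of a 2-sum (n₁,n₂)-free subset of [n₁]×[n₂] equals ⌊(n₁·n₂ + n₁ + n₂ − 1)/2⌋. -/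
/-!
Write `b = (n₁, n₂)` and `B = [n₁] × [n₂]`. If `p + q = b` with `p, q ∈ B`, then `q = b - p` and
both lie in the inner box `P = [n₁ - 1] × [n₂ - 1] = {p ∈ B | b - p ∈ B}`, on which `p ↦ b - p` is an
involution with at most one fixed point. A `b`-free set meets each of its orbits at most once, so
it has at most `⌊|P| / 2⌋ + |B \ P|` elements; conversely `B \ P` together with the points of `P`
lying lexicographically above their reflection is `b`-free of that size. Finally
`⌊|P| / 2⌋ + |B \ P| = ⌊(2|B| - |P|) / 2⌋ = ⌊(n₁n₂ + n₁ + n₂ - 1) / 2⌋`.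
-/

open Finset

theorem card_le_two_mul_card_filter_lt_add_one {γ β : Type*} [DecidableEq γ] [LinearOrder β]
    {s : Finset γ} {σ : γ → γ} (hσ : ∀ x ∈ s, σ x ∈ s) (hinv : Function.Involutive σ)
    (hfix : ∀ x y, σ x = x → σ y = y → x = y) {f : γ → β} (hf : Function.Injective f) :
    #s ≤ 2 * #{x ∈ s | f (σ x) < f x} + 1 := by
  set U := {x ∈ s | f (σ x) < f x}
  have hcover : s ⊆ U ∪ U.image σ ∪ {x ∈ s | σ x = x} := by
    intro x hx
    rcases lt_trichotomy (f (σ x)) (f x) with h | h | h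
    · exact mem_union_left _ (mem_union_left _ (mem_filter.2 ⟨hx, h⟩))
    · exact mem_union_right _ (mem_filter.2 ⟨hx, hf h⟩)
    · refine mem_union_left _ (mem_union_right _ (mem_image.2 ⟨σ x, ?_, hinv x⟩))
      exact mem_filter.2 ⟨hσ x hx, by rwa [hinv x]⟩
  have hfixed : #{x ∈ s | σ x = x} ≤ 1 :=
    card_le_one.2 fun x hx y hy => hfix x y (mem_filter.1 hx).2 (mem_filter.1 hy).2
  calc #s ≤ #(U ∪ U.image σ ∪ {x ∈ s | σ x = x}) := card_le_card hcover
    _ ≤ #U + #(U.image σ) + #{x ∈ s | σ x = x} :=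
      (card_union_le _ _).trans (Nat.add_le_add_right (card_union_le _ _) _)
    _ ≤ 2 * #U + 1 := by have := card_image_le (s := U) (f := σ); omega

def IsTwoSumFree {α : Type*} [Add α] (S : Finset α) (b : α) : Prop :=
  ∀ p ∈ S, ∀ q ∈ S, p + q ≠ b

theorem not_exists_fin_two_sum_eq_iff {α : Type*} [AddCommMonoid α] {S : Finset α} {b : α} :
    (¬ ∃ a : Fin 2 → α, (∀ i, a i ∈ S) ∧ ∑ i, a i = b) ↔ IsTwoSumFree S b := by
  simp only [IsTwoSumFree, Fin.forall_fin_two, Fin.sum_univ_two, not_exists, not_and]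
  exact ⟨fun h p hp q hq => h ![p, q] ⟨hp, hq⟩, fun h a ha => h _ ha.1 _ ha.2⟩

section TwoSumFree

variable {α : Type*} [AddCommGroup α] [DecidableEq α]

theorem IsTwoSumFree.two_mul_card_add_card_filter_le {S B : Finset α} {b : α}
    (hfree : IsTwoSumFree S b) (hSB : S ⊆ B) :
    2 * #S + #{p ∈ B | b - p ∈ B} ≤ 2 * #B := by
  set T := {p ∈ S | b - p ∈ B}
  have hT : 2 * #T ≤ #{p ∈ B | b - p ∈ B} := by
    have hdisj : Disjoint T (T.image (b - ·)) := by
      rw [disjoint_right]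
      intro _ hq' hq
      obtain ⟨p, hp, rfl⟩ := mem_image.1 hq'
      exact hfree p (mem_filter.1 hp).1 _ (mem_filter.1 hq).1 (add_sub_cancel p b)
    have hsub : T ∪ T.image (b - ·) ⊆ {p ∈ B | b - p ∈ B} := by
      refine union_subset (filter_subset_filter _ hSB) ?_
      intro _ hq
      obtain ⟨p, hp, rfl⟩ := mem_image.1 hq
      rw [mem_filter] at hp ⊢
      exact ⟨hp.2, by rw [sub_sub_cancel]; exact hSB hp.1⟩
    calc 2 * #T = #T + #(T.image (b - ·)) := by
          rw [card_image_of_injective _ sub_right_injective, two_mul]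
      _ = #(T ∪ T.image (b - ·)) := (card_union_of_disjoint hdisj).symm
      _ ≤ _ := card_le_card hsub
  have hS : #T + #{p ∈ S | b - p ∉ B} = #S := card_filter_add_card_filter_not _
  have hB : #{p ∈ B | b - p ∈ B} + #{p ∈ B | b - p ∉ B} = #B := card_filter_add_card_filter_not _
  have hrest : #{p ∈ S | b - p ∉ B} ≤ #{p ∈ B | b - p ∉ B} :=
    card_le_card (filter_subset_filter _ hSB)
  omega

theorem exists_subset_isTwoSumFree_two_mul_card_le [IsAddTorsionFree α] {β : Type*} [LinearOrder β]
    (B : Finset α) (b : α) {f : α → β} (hf : Function.Injective f) :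
    ∃ S ⊆ B, IsTwoSumFree S b ∧ 2 * #B ≤ 2 * #S + #{p ∈ B | b - p ∈ B} + 1 := by
  refine ⟨{p ∈ B | b - p ∈ B → f (b - p) < f p}, filter_subset _ _, ?_, ?_⟩
  · intro p hp q hq hpq
    obtain rfl : q = b - p := eq_sub_of_add_eq' hpq
    rw [mem_filter, sub_sub_cancel] at hq
    exact lt_asymm (hq.2 (mem_filter.1 hp).1) ((mem_filter.1 hp).2 hq.1)
  · set P := {p ∈ B | b - p ∈ B}
    have hσ : ∀ x ∈ P, b - x ∈ P := fun x hx => by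
      rw [mem_filter, sub_sub_cancel]
      exact (mem_filter.1 hx).symm
    have hfix : ∀ x y, b - x = x → b - y = y → x = y := fun x y hx hy =>
      nsmul_right_injective two_ne_zero <| show 2 • x = 2 • y by
        rw [two_nsmul, two_nsmul, ← sub_eq_iff_eq_add.1 hx, ← sub_eq_iff_eq_add.1 hy]
    have hhalf := card_le_two_mul_card_filter_lt_add_one hσ (sub_sub_cancel b) hfix hf
    have hB : #{p ∈ B | b - p ∈ B → f (b - p) < f p} + #{p ∈ B | ¬(b - p ∈ B → f (b - p) < f p)}
        = #B := card_filter_add_card_filter_not _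
    have hP : #{p ∈ P | f (b - p) < f p} + #{p ∈ P | ¬f (b - p) < f p} = #P :=
      card_filter_add_card_filter_not _
    have hrest : {p ∈ B | ¬(b - p ∈ B → f (b - p) < f p)} = {p ∈ P | ¬f (b - p) < f p} := by
      ext p
      simp only [P, mem_filter, Classical.not_imp, and_assoc]
    rw [hrest] at hB
    omega

end TwoSumFree

theorem filter_sub_mem_Icc_eq {α : Type*} [AddCommGroup α] [PartialOrder α]
    [IsOrderedAddMonoid α] [LocallyFiniteOrder α] [DecidableEq α] {a b : α} (ha : 0 ≤ a) :
    {p ∈ Icc a b | b - p ∈ Icc a b} = Icc a (b - a) := by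
  ext p
  simp only [mem_filter, mem_Icc, le_sub_comm (a := a), sub_le_self_iff]
  exact ⟨fun ⟨⟨hap, _⟩, hpb, _⟩ => ⟨hap, hpb⟩, fun ⟨hap, hpb⟩ =>
    ⟨⟨hap, hpb.trans (sub_le_self b ha)⟩, hpb, ha.trans hap⟩⟩

theorem card_Icc_one_one (m n : ℤ) (hm : 0 ≤ m) (hn : 0 ≤ n) :
    (#(Icc ((1 : ℤ), (1 : ℤ)) (m, n)) : ℤ) = m * n := by
  rw [card_Icc_prod, Nat.cast_mul, Int.card_Icc, Int.card_Icc, add_sub_cancel_right,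
    add_sub_cancel_right, Int.toNat_of_nonneg hm, Int.toNat_of_nonneg hn]

/-- For all positive integers n₁, n₂, the maximum cardinality of a 2-sum
(n₁,n₂)-free subset of [n₁]×[n₂] equals ⌊(n₁·n₂ + n₁ + n₂ − 1)/2⌋. -/
theorem stmt_9 (n₁ n₂ : ℕ) (h₁ : 0 < n₁) (h₂ : 0 < n₂) :
    (∀ S : Finset (ℤ × ℤ), S ⊆ Finset.Icc (1, 1) ((n₁ : ℤ), (n₂ : ℤ)) →
      (¬ ∃ a : Fin 2 → ℤ × ℤ, (∀ i, a i ∈ S) ∧ ∑ i, a i = ((n₁ : ℤ), (n₂ : ℤ))) →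
      (S.card : ℤ) ≤ ⌊((n₁ : ℚ) * n₂ + n₁ + n₂ - 1) / 2⌋) ∧
    (∃ S : Finset (ℤ × ℤ), S ⊆ Finset.Icc (1, 1) ((n₁ : ℤ), (n₂ : ℤ)) ∧
      (¬ ∃ a : Fin 2 → ℤ × ℤ, (∀ i, a i ∈ S) ∧ ∑ i, a i = ((n₁ : ℤ), (n₂ : ℤ))) ∧
      (S.card : ℤ) = ⌊((n₁ : ℚ) * n₂ + n₁ + n₂ - 1) / 2⌋) := by
  set b : ℤ × ℤ := (n₁, n₂)
  set B := Icc (1, 1) b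
  have hB : (#B : ℤ) = n₁ * n₂ := card_Icc_one_one _ _ (by positivity) (by positivity)
  have hP : (#{p ∈ B | b - p ∈ B} : ℤ) = (n₁ - 1) * (n₂ - 1) := by
    rw [filter_sub_mem_Icc_eq (by decide), Prod.mk_sub_mk]
    exact card_Icc_one_one _ _ (by omega) (by omega)
  have hfloor : ⌊((n₁ : ℚ) * n₂ + n₁ + n₂ - 1) / 2⌋ = (2 * #B - #{p ∈ B | b - p ∈ B}) / 2 := by
    rw [hB, hP, show 2 * (n₁ * n₂ : ℤ) - (n₁ - 1) * (n₂ - 1) = n₁ * n₂ + n₁ + n₂ - 1 by ring]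
    exact_mod_cast Rat.floor_intCast_div_natCast (n₁ * n₂ + n₁ + n₂ - 1) 2
  simp only [hfloor, not_exists_fin_two_sum_eq_iff]
  refine ⟨fun S hSB hfree => ?_, ?_⟩
  · have := hfree.two_mul_card_add_card_filter_le hSB
    omega
  · obtain ⟨S, hSB, hfree, hS⟩ := exists_subset_isTwoSumFree_two_mul_card_le B b toLex.injective
    have := hfree.two_mul_card_add_card_filter_le hSB
    exact ⟨S, hSB, hfree, by omega⟩
end

section
/- For all positive integers d and n, the maximum cardinality of a 2-sum (n,…,n)-free subset of [n]^d equals n^d − ⌈(n−1)^d/2⌉. -/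
private lemma digits_aux : ∀ (d : ℕ) (n : ℕ) (a : Fin d → ℤ),
    (∀ i, |a i| ≤ (n : ℤ)) → (∑ i, a i * ((n : ℤ) + 1) ^ (i : ℕ)) = 0 → ∀ i, a i = 0 := by
  intro d
  induction d with
  | zero => intro n a _ _ i; exact i.elim0
  | succ d ih =>
    intro n a hb hs
    rw [Fin.sum_univ_succ] at hs
    have key : ∑ i : Fin d, a i.succ * ((n:ℤ)+1) ^ ((i.succ : Fin (d+1)) : ℕ)
        = ((n:ℤ)+1) * ∑ i : Fin d, a i.succ * ((n:ℤ)+1) ^ (i : ℕ) := by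
      rw [Finset.mul_sum]
      refine Finset.sum_congr rfl fun i _ => ?_
      rw [Fin.val_succ, pow_succ]; ring
    rw [key] at hs
    simp only [Fin.val_zero, pow_zero, mul_one] at hs
    have hdvd : ((n:ℤ)+1) ∣ a 0 := ⟨-∑ i : Fin d, a i.succ * ((n:ℤ)+1) ^ (i : ℕ), by linarith⟩
    have h0 : a 0 = 0 := Int.eq_zero_of_abs_lt_dvd hdvd (by have := hb 0; omega)
    have hT : ∑ i : Fin d, a i.succ * ((n:ℤ)+1) ^ (i : ℕ) = 0 := by
      rw [h0, zero_add] at hs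
      have hne : ((n:ℤ)+1) ≠ 0 := by positivity
      exact (mul_eq_zero.mp hs).resolve_left hne
    have hrest := ih n (fun i => a i.succ) (fun i => hb i.succ) hT
    intro i
    exact Fin.cases h0 (fun j => hrest j) i

/-- For all positive integers d and n, the maximum cardinality of a
2-sum (n,…,n)-free subset of [n]^d equals n^d − ⌈(n−1)^d/2⌉. -/
theorem stmt_10 (d n : ℕ) (hd : 0 < d) (hn : 0 < n) :
    (∀ S : Finset (Fin d → ℤ), S ⊆ Finset.Icc (fun _ => (1 : ℤ)) (fun _ => (n : ℤ)) →
      (¬ ∃ a : Fin 2 → (Fin d → ℤ), (∀ i, a i ∈ S) ∧ ∑ i, a i = fun _ => (n : ℤ)) →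
      (S.card : ℤ) ≤ (n : ℤ) ^ d - ⌈((n : ℚ) - 1) ^ d / 2⌉) ∧
    (∃ S : Finset (Fin d → ℤ), S ⊆ Finset.Icc (fun _ => (1 : ℤ)) (fun _ => (n : ℤ)) ∧
      (¬ ∃ a : Fin 2 → (Fin d → ℤ), (∀ i, a i ∈ S) ∧ ∑ i, a i = fun _ => (n : ℤ)) ∧
      (S.card : ℤ) = (n : ℤ) ^ d - ⌈((n : ℚ) - 1) ^ d / 2⌉) := by
  classical
  set K : ℤ := ⌈((n : ℚ) - 1) ^ d / 2⌉ with hK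
  set box : Finset (Fin d → ℤ) := Finset.Icc (fun _ => (1:ℤ)) (fun _ => (n:ℤ)) with hbox
  set I : Finset (Fin d → ℤ) := Finset.Icc (fun _ => (1:ℤ)) (fun _ => (n:ℤ) - 1) with hI
  have mem_box : ∀ x : Fin d → ℤ, x ∈ box ↔ ∀ i, 1 ≤ x i ∧ x i ≤ (n:ℤ) := by
    intro x; simp [hbox, Finset.mem_Icc, Pi.le_def, forall_and]
  have mem_I : ∀ x : Fin d → ℤ, x ∈ I ↔ ∀ i, 1 ≤ x i ∧ x i ≤ (n:ℤ) - 1 := by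
    intro x; simp [hI, Finset.mem_Icc, Pi.le_def, forall_and]
  have card_box : box.card = n ^ d := by
    rw [hbox, Pi.card_Icc]
    simp [Int.card_Icc]
  have card_I : I.card = (n-1) ^ d := by
    rw [hI, Pi.card_Icc]
    have h1 : ((n:ℤ) - 1 + 1 - 1).toNat = n - 1 := by omega
    simp [Int.card_Icc, h1]
  have hIbox : I ⊆ box := by
    intro x hx
    rw [mem_I] at hx; rw [mem_box]
    intro i; have := hx i; omega
  set f : (Fin d → ℤ) → ℤ := fun x => ∑ i, x i * ((n:ℤ)+1) ^ (i:ℕ) with hf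
  set F : ℤ := ∑ i : Fin d, (n:ℤ) * ((n:ℤ)+1) ^ (i:ℕ) with hF
  have f_sigma : ∀ x : Fin d → ℤ, f (fun i => (n:ℤ) - x i) = F - f x := by
    intro x; simp [hf, hF, sub_mul, Finset.sum_sub_distrib]
  have f_const : f (fun _ => (n:ℤ)) = F := rfl
  have sigma_mem : ∀ x ∈ I, (fun i => (n:ℤ) - x i) ∈ I := by
    intro x hx
    rw [mem_I] at hx ⊢
    intro i; have := hx i; omega
  have sigma_inj : Function.Injective (fun (x : Fin d → ℤ) => fun i => (n:ℤ) - x i) := by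
    intro x y h
    funext i
    have := congrFun h i
    simp at this; linarith
  set A : Finset (Fin d → ℤ) := I.filter (fun x => F < 2 * f x) with hA
  set B : Finset (Fin d → ℤ) := I.filter (fun x => 2 * f x < F) with hB
  set C : Finset (Fin d → ℤ) := I.filter (fun x => 2 * f x = F) with hC
  have cardAB : A.card = B.card := by
    have himg : A.image (fun x => fun i => (n:ℤ) - x i) = B := by
      ext y
      simp only [Finset.mem_image, hA, hB, Finset.mem_filter]
      constructor
      · rintro ⟨x, ⟨hxI, hxf⟩, rfl⟩
        refine ⟨sigma_mem x hxI, ?_⟩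
        rw [f_sigma]; linarith
      · rintro ⟨hyI, hyf⟩
        refine ⟨fun i => (n:ℤ) - y i, ⟨sigma_mem y hyI, ?_⟩, ?_⟩
        · rw [f_sigma]; linarith
        · funext i; ring
    rw [← himg, Finset.card_image_of_injective _ sigma_inj]
  have hC_char : ∀ x ∈ C, ∀ i, 2 * x i = (n:ℤ) := by
    intro x hx
    rw [hC, Finset.mem_filter] at hx
    obtain ⟨hxI, hfx⟩ := hx
    rw [mem_I] at hxI
    have key := digits_aux d n (fun i => 2 * x i - (n:ℤ))
      (fun i => by show |2 * x i - (n:ℤ)| ≤ (n:ℤ); have := hxI i; rw [abs_le]; omega)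
      (by
        have hsum : ∑ i, (2 * x i - (n:ℤ)) * ((n:ℤ)+1) ^ (i:ℕ) = 2 * f x - F := by
          rw [hf, hF, Finset.mul_sum, ← Finset.sum_sub_distrib]
          exact Finset.sum_congr rfl fun i _ => by ring
        rw [hsum, hfx, sub_self])
    intro i
    have := key i
    omega
  have hpart : A.card + (B.card + C.card) = I.card := by
    have h1 := Finset.card_filter_add_card_filter_not (s := I) (p := fun x => F < 2 * f x)
    have h2 : I.filter (fun x => ¬ F < 2 * f x) = B ∪ C := by
      ext x
      simp only [Finset.mem_filter, Finset.mem_union, hB, hC, not_lt]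
      constructor
      · rintro ⟨hx, h⟩
        rcases lt_or_eq_of_le h with h' | h'
        · exact Or.inl ⟨hx, h'⟩
        · exact Or.inr ⟨hx, h'⟩
      · rintro (⟨hx, h⟩ | ⟨hx, h⟩) <;> exact ⟨hx, by omega⟩
    have hdisj : Disjoint B C := by
      rw [Finset.disjoint_left]
      intro x hx1 hx2
      rw [hB, Finset.mem_filter] at hx1
      rw [hC, Finset.mem_filter] at hx2
      omega
    rw [h2, Finset.card_union_of_disjoint hdisj] at h1
    exact h1
  have cardC : C.card = (n-1)^d % 2 := by
    rcases Nat.even_or_odd n with ⟨t, htn⟩ | hno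
    · -- n even
      have ht1 : 1 ≤ t := by omega
      have hCeq : C = {fun _ => (t:ℤ)} := by
        ext x
        rw [Finset.mem_singleton]
        constructor
        · intro hx
          funext i
          have := hC_char x hx i
          have hnt : (n:ℤ) = 2 * t := by push_cast [htn]; ring
          omega
        · rintro rfl
          rw [hC, Finset.mem_filter]
          constructor
          · rw [mem_I]; intro i
            constructor
            · exact_mod_cast ht1
            · have : (t:ℤ) ≤ (n:ℤ) - 1 := by push_cast [htn]; omega
              exact this
          · rw [hf, hF, Finset.mul_sum]
            refine Finset.sum_congr rfl fun i _ => ?_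
            have hnt : (n:ℤ) = 2 * t := by push_cast [htn]; ring
            rw [hnt]; ring
      rw [hCeq, Finset.card_singleton]
      have hodd : Odd ((n-1)^d) := by
        refine Odd.pow ?_
        rw [Nat.odd_iff]; omega
      rw [Nat.odd_iff] at hodd
      omega
    · -- n odd
      have hCeq : C = ∅ := by
        rw [Finset.eq_empty_iff_forall_notMem]
        intro x hx
        have := hC_char x hx ⟨0, hd⟩
        rw [Nat.odd_iff] at hno
        omega
      rw [hCeq, Finset.card_empty]
      have heven : Even ((n-1)^d) := by
        refine Nat.even_pow.mpr ⟨?_, by omega⟩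
        have hno' := hno
        rw [Nat.odd_iff] at hno'
        rw [Nat.even_iff]
        omega
      rw [Nat.even_iff] at heven
      omega
  -- ceiling fact
  have hKm : 2 * K = (((n-1)^d : ℕ) : ℤ) + (((n-1)^d % 2 : ℕ) : ℤ) := by
    have hcast : ((n:ℚ) - 1)^d = (((n-1)^d : ℕ) : ℚ) := by
      rw [Nat.cast_pow, Nat.cast_sub hn, Nat.cast_one]
    rw [hK, hcast]
    rcases Nat.even_or_odd ((n-1)^d) with ⟨t, ht⟩ | ⟨t, ht⟩
    · have h2 : (((n-1)^d : ℕ) : ℚ) / 2 = (t:ℚ) := by rw [ht]; push_cast; ring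
      rw [h2, Int.ceil_natCast]
      omega
    · have h2 : (((n-1)^d : ℕ) : ℚ) / 2 = (t:ℚ) + 1/2 := by rw [ht]; push_cast; ring
      rw [h2]
      have h12 : ⌈(1/2:ℚ)⌉ = (1:ℤ) := by
        rw [Int.ceil_eq_iff]; norm_num
      have h3 : ⌈(t:ℚ) + 1/2⌉ = (t:ℤ) + 1 := by
        rw [show ((t:ℚ)) = ((t:ℤ):ℚ) by push_cast; ring, add_comm, Int.ceil_add_intCast, h12]
        ring
      rw [h3]
      omega
  have hpow_cast : ((n:ℤ))^d = ((n^d : ℕ) : ℤ) := by push_cast; ring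
  constructor
  · -- upper bound
    intro S hSbox hfree
    have hdisjS : Disjoint (S ∩ I) ((S ∩ I).image (fun x => fun i => (n:ℤ) - x i)) := by
      rw [Finset.disjoint_left]
      intro y hy1 hy2
      simp only [Finset.mem_image] at hy2
      obtain ⟨x, hx, hxy⟩ := hy2
      apply hfree
      refine ⟨![x, y], fun i => ?_, ?_⟩
      · fin_cases i
        · exact Finset.mem_of_mem_inter_left hx
        · exact Finset.mem_of_mem_inter_left hy1
      · rw [Fin.sum_univ_two]
        funext j
        have := congrFun hxy j
        simp only [Matrix.cons_val_zero, Matrix.cons_val_one, Matrix.head_cons, Pi.add_apply]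
        omega
    have h2card : 2 * (S ∩ I).card ≤ (n-1)^d := by
      have hsub : (S ∩ I) ∪ (S ∩ I).image (fun x => fun i => (n:ℤ) - x i) ⊆ I := by
        apply Finset.union_subset (Finset.inter_subset_right)
        intro y hy
        simp only [Finset.mem_image] at hy
        obtain ⟨x, hx, hxy⟩ := hy
        rw [← hxy]
        exact sigma_mem x (Finset.mem_of_mem_inter_right hx)
      calc 2 * (S ∩ I).card
          = ((S ∩ I) ∪ (S ∩ I).image (fun x => fun i => (n:ℤ) - x i)).card := by
            rw [Finset.card_union_of_disjoint hdisjS,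
              Finset.card_image_of_injective _ sigma_inj]; ring
        _ ≤ I.card := Finset.card_le_card hsub
        _ = (n-1)^d := card_I
    have hsplit : (S ∩ I).card + (S \ I).card = S.card := Finset.card_inter_add_card_sdiff S I
    have hout : (S \ I).card + (n-1)^d ≤ n^d := by
      have h1 : S \ I ⊆ box \ I := Finset.sdiff_subset_sdiff hSbox (le_refl I)
      have h2 : (box \ I).card = box.card - I.card := Finset.card_sdiff_of_subset hIbox
      have h3 := Finset.card_le_card h1
      have h4 := Finset.card_le_card hIbox
      omega
    rw [hpow_cast]
    omega
  · -- construction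
    refine ⟨(box \ I) ∪ A, ?_, ?_, ?_⟩
    · apply Finset.union_subset
      · exact (Finset.sdiff_subset).trans (le_refl box)
      · exact (Finset.filter_subset _ _).trans hIbox
    · rintro ⟨a, ha, hsum⟩
      have hsum2 : ∀ j, a 0 j + a 1 j = (n:ℤ) := by
        intro j
        have h := congrFun hsum j
        rw [Finset.sum_apply, Fin.sum_univ_two] at h
        exact h
      have hmem : ∀ i : Fin 2, a i ∈ box := by
        intro i
        have := ha i
        rw [Finset.mem_union] at this
        rcases this with h | h
        · exact Finset.sdiff_subset h
        · exact hIbox (Finset.mem_of_mem_filter _ h)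
      have hbd : ∀ i k : Fin 2, (∀ j, a i j + a k j = (n:ℤ)) → a i ∈ box \ I → False := by
        intro i k hsk hi
        rw [Finset.mem_sdiff] at hi
        obtain ⟨hib, hiI⟩ := hi
        rw [mem_I] at hiI
        push_neg at hiI
        rw [mem_box] at hib
        obtain ⟨j, hj⟩ := hiI
        have h1 := hib j
        have hk := hmem k
        rw [mem_box] at hk
        have h2 := hk j
        have h3 := hsk j
        have h4 := hj h1.1
        omega
      have h0 := ha 0
      have h1 := ha 1
      rw [Finset.mem_union] at h0 h1
      rcases h0 with h0 | h0
      · exact hbd 0 1 hsum2 h0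
      rcases h1 with h1 | h1
      · exact hbd 1 0 (fun j => by have := hsum2 j; omega) h1
      rw [hA, Finset.mem_filter] at h0 h1
      have hfadd : f (a 0) + f (a 1) = F := by
        have : (fun j => a 0 j + a 1 j) = (fun _ => (n:ℤ)) := funext hsum2
        calc f (a 0) + f (a 1) = f (fun j => a 0 j + a 1 j) := by
              rw [hf]; simp [add_mul, Finset.sum_add_distrib]
          _ = F := by rw [this, f_const]
      linarith [h0.2, h1.2]
    · -- cardinality
      have hdisj2 : Disjoint (box \ I) A := by
        rw [Finset.disjoint_left]
        intro x hx1 hx2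
        rw [Finset.mem_sdiff] at hx1
        exact hx1.2 (Finset.mem_of_mem_filter _ hx2)
      rw [Finset.card_union_of_disjoint hdisj2, Finset.card_sdiff_of_subset hIbox]
      have h4 := Finset.card_le_card hIbox
      rw [hpow_cast]
      omega
end

section
/- For all real numbers α and β with 3α < 1 < 3β, the inequality (1−α)(1−β)/2 + (2α + 2β − 1 − 3αβ)²/(2(1−3α)(3β−1)) ≥ 2/9 holds. -/
/-- For all real α, β with 3α < 1 < 3β,
(1−α)(1−β)/2 + (2α + 2β − 1 − 3αβ)²/(2(1−3α)(3β−1)) ≥ 2/9. -/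
theorem stmt_12 (α β : ℝ) (hα : 3 * α < 1) (hβ : 1 < 3 * β) :
    (1 - α) * (1 - β) / 2 +
      (2 * α + 2 * β - 1 - 3 * α * β) ^ 2 / (2 * (1 - 3 * α) * (3 * β - 1)) ≥ 2 / 9 := by
  have ha : 0 < 1 - 3 * α := by linarith
  have hb : 0 < 3 * β - 1 := by linarith
  have hD : 0 < 2 * (1 - 3 * α) * (3 * β - 1) := by positivity
  rw [ge_iff_le, ← sub_nonneg]
  have h : (1 - α) * (1 - β) / 2 +
      (2 * α + 2 * β - 1 - 3 * α * β) ^ 2 / (2 * (1 - 3 * α) * (3 * β - 1)) - 2 / 9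
      = ((1 - 3 * α) - (3 * β - 1)) ^ 2 / (9 * (2 * (1 - 3 * α) * (3 * β - 1))) := by
    rw [div_add_div _ _ (by norm_num) hD.ne', div_sub_div _ _ (mul_ne_zero two_ne_zero hD.ne') (by norm_num),
      div_eq_div_iff (mul_ne_zero (mul_ne_zero two_ne_zero hD.ne') (by norm_num)) (mul_ne_zero (by norm_num) hD.ne')]
    ring
  rw [h]
  positivity
end

section
/- Let n₁ and n₂ be positive integers and let S be a 3-sum (n₁,n₂)-free subset of [n₁]×[n₂]. If S contains a point (x₁,x₂) with 3x₁ ≤ n₁ and 3x₂ ≤ n₂, then |S| ≤ (7/9)·n₁·n₂ + max(n₁,n₂) (an inequality between real numbers). -/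
/-!
Let `x ∈ S` be the small point and `c = (n₁, n₂) - x`. Since `S` is 3-sum `(n₁, n₂)`-free, no two
elements of `S` sum to `c`. The box `B = [1, c₁ - 1] × [1, c₂ - 1]` is invariant under the
reflection `p ↦ c - p`, which pairs its points off, so `S` contains at most half of `B`; hence
`|S| ≤ n₁ n₂ - |B| / 2`. As `3 x ≤ n`, the box `B` has side lengths at least `(2 nᵢ - 3) / 3`,
and `n₁ n₂ - (2 n₁ - 3)(2 n₂ - 3) / 18 ≤ (7/9) n₁ n₂ + max n₁ n₂`.
-/

open Finset

namespace Finset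

variable {α : Type*}

def IsKSumFree [AddCommMonoid α] (S : Finset α) (k : ℕ) (b : α) : Prop :=
  ¬ ∃ a : Fin k → α, (∀ i, a i ∈ S) ∧ ∑ i, a i = b

theorem IsKSumFree.sub_of_mem [AddCommGroup α] {S : Finset α} {k : ℕ} {b x : α}
    (hS : S.IsKSumFree (k + 1) b) (hx : x ∈ S) : S.IsKSumFree k (b - x) := by
  rintro ⟨a, ha, hsum⟩
  refine hS ⟨Fin.cons x a, Fin.cases hx ha, ?_⟩
  rw [Fin.sum_univ_succ, Fin.cons_zero]
  simp only [Fin.cons_succ, hsum, add_sub_cancel]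

theorem IsKSumFree.add_ne [AddCommMonoid α] {S : Finset α} {b : α} (hS : S.IsKSumFree 2 b) :
    ∀ p ∈ S, ∀ q ∈ S, p + q ≠ b := fun p hp q hq hpq =>
  hS ⟨![p, q], fun i => by fin_cases i <;> assumption, by simpa using hpq⟩

/-- The reflection `p ↦ c - p` maps `T ∩ B` into `B \ T`. -/
theorem two_mul_card_inter_le [AddCommGroup α] [DecidableEq α] {T B : Finset α} {c : α}
    (hB : ∀ p ∈ B, c - p ∈ B) (hT : ∀ p ∈ T, ∀ q ∈ T, p + q ≠ c) :
    2 * #(T ∩ B) ≤ #B := by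
  have hdisj : Disjoint ((T ∩ B).image (c - ·)) (T ∩ B) := by
    refine disjoint_left.mpr ?_
    rintro _ hq hpT
    obtain ⟨p, hp, rfl⟩ := mem_image.mp hq
    exact hT p (mem_inter.mp hp).1 _ (mem_inter.mp hpT).1 (add_sub_cancel p c)
  have hsub : (T ∩ B).image (c - ·) ∪ (T ∩ B) ⊆ B :=
    union_subset (image_subset_iff.mpr fun p hp => hB p (mem_inter.mp hp).2) inter_subset_right
  have := card_le_card hsub
  rw [card_union_of_disjoint hdisj, card_image_of_injective _ sub_right_injective] at this
  omega

theorem two_mul_card_add_card_le [AddCommGroup α] [DecidableEq α] {S B A : Finset α} {c : α}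
    (hSA : S ⊆ A) (hBA : B ⊆ A) (hB : ∀ p ∈ B, c - p ∈ B) (hS : ∀ p ∈ S, ∀ q ∈ S, p + q ≠ c) :
    2 * #S + #B ≤ 2 * #A := by
  have hunion := card_le_card (union_subset hSA hBA)
  have := card_union_add_card_inter S B
  have := two_mul_card_inter_le hB hS
  omega

theorem sub_mem_Icc_sub [AddCommGroup α] [PartialOrder α] [IsOrderedAddMonoid α]
    [LocallyFiniteOrder α] {a c p : α} (hp : p ∈ Icc a (c - a)) : c - p ∈ Icc a (c - a) := by
  obtain ⟨hap, hpc⟩ := mem_Icc.mp hp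
  exact mem_Icc.mpr ⟨le_sub_comm.mp hpc, sub_le_sub_left hap c⟩

end Finset

theorem Int.natCast_card_Icc_one_one {m₁ m₂ : ℤ} (h₁ : 0 ≤ m₁) (h₂ : 0 ≤ m₂) :
    (#(Icc ((1 : ℤ), (1 : ℤ)) (m₁, m₂)) : ℤ) = m₁ * m₂ := by
  simp [card_Icc_prod, Int.card_Icc, h₁, h₂]

theorem le_seven_ninths_mul_add_max {K : Type*} [Field K] [LinearOrder K] [IsStrictOrderedRing K]
    {s n₁ n₂ x₁ x₂ : K} (hx₁ : 1 ≤ x₁) (hx₂ : 1 ≤ x₂) (h3x₁ : 3 * x₁ ≤ n₁) (h3x₂ : 3 * x₂ ≤ n₂)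
    (h : 2 * s + (n₁ - x₁ - 1) * (n₂ - x₂ - 1) ≤ 2 * (n₁ * n₂)) :
    s ≤ 7 / 9 * (n₁ * n₂) + max n₁ n₂ := by
  have hprod : (2 * n₁ - 3) * (2 * n₂ - 3) ≤ (3 * (n₁ - x₁ - 1)) * (3 * (n₂ - x₂ - 1)) :=
    mul_le_mul (by linarith) (by linarith) (by linarith) (by linarith)
  nlinarith [le_max_left n₁ n₂, le_max_right n₁ n₂]

theorem stmt_14_general (n₁ n₂ : ℕ)
    (S : Finset (ℤ × ℤ)) (hS : S ⊆ Finset.Icc (1, 1) ((n₁ : ℤ), (n₂ : ℤ)))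
    (hfree : ¬ ∃ a : Fin 3 → ℤ × ℤ, (∀ i, a i ∈ S) ∧ ∑ i, a i = ((n₁ : ℤ), (n₂ : ℤ)))
    (x₁ x₂ : ℤ) (hx : (x₁, x₂) ∈ S) (hx₁ : 3 * x₁ ≤ (n₁ : ℤ)) (hx₂ : 3 * x₂ ≤ (n₂ : ℤ)) :
    (S.card : ℝ) ≤ (7 / 9 : ℝ) * (n₁ * n₂) + (max n₁ n₂ : ℕ) := by
  obtain ⟨⟨hx₁pos, hx₂pos⟩, -⟩ := mem_Icc.mp (hS hx)
  set c : ℤ × ℤ := ((n₁ : ℤ), (n₂ : ℤ)) - (x₁, x₂)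
  have hBA : Icc (1, 1) (c - (1, 1)) ⊆ Icc (1, 1) ((n₁ : ℤ), (n₂ : ℤ)) :=
    Icc_subset_Icc le_rfl (Prod.mk_le_mk.mpr ⟨by simp [c]; omega, by simp [c]; omega⟩)
  have hcount := two_mul_card_add_card_le hS hBA (fun _ => sub_mem_Icc_sub)
    (IsKSumFree.sub_of_mem hfree hx).add_ne
  have hA := Int.natCast_card_Icc_one_one (Int.natCast_nonneg n₁) (Int.natCast_nonneg n₂)
  have hB := Int.natCast_card_Icc_one_one (m₁ := n₁ - x₁ - 1) (m₂ := n₂ - x₂ - 1)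
    (by omega) (by omega)
  have hcountℤ : 2 * (#S : ℤ) + (n₁ - x₁ - 1) * (n₂ - x₂ - 1) ≤ 2 * (n₁ * n₂) := by
    simp only [c, Prod.mk_sub_mk] at hcount
    rw [← hA, ← hB]
    exact_mod_cast hcount
  have hcountℝ : 2 * (#S : ℝ) + (n₁ - x₁ - 1) * (n₂ - x₂ - 1) ≤ 2 * (n₁ * n₂) := by
    exact_mod_cast hcountℤ
  rw [Nat.cast_max]
  exact le_seven_ninths_mul_add_max (by exact_mod_cast hx₁pos) (by exact_mod_cast hx₂pos)
    (by exact_mod_cast hx₁) (by exact_mod_cast hx₂) hcountℝ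

/-- For positive integers n₁, n₂ and a 3-sum (n₁,n₂)-free subset S of
[n₁]×[n₂] containing a point (x₁,x₂) with 3x₁ ≤ n₁ and 3x₂ ≤ n₂, we have
|S| ≤ (7/9)·n₁·n₂ + max(n₁,n₂). -/
theorem stmt_14 (n₁ n₂ : ℕ) (h₁ : 0 < n₁) (h₂ : 0 < n₂)
    (S : Finset (ℤ × ℤ)) (hS : S ⊆ Finset.Icc (1, 1) ((n₁ : ℤ), (n₂ : ℤ)))
    (hfree : ¬ ∃ a : Fin 3 → ℤ × ℤ, (∀ i, a i ∈ S) ∧ ∑ i, a i = ((n₁ : ℤ), (n₂ : ℤ)))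
    (x₁ x₂ : ℤ) (hx : (x₁, x₂) ∈ S) (hx₁ : 3 * x₁ ≤ (n₁ : ℤ)) (hx₂ : 3 * x₂ ≤ (n₂ : ℤ)) :
    (S.card : ℝ) ≤ (7 / 9 : ℝ) * (n₁ * n₂) + (max n₁ n₂ : ℕ) :=
  stmt_14_general n₁ n₂ S hS hfree x₁ x₂ hx hx₁ hx₂
end
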